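/- arXiv:1810.03313 — 8 statements merged into one kernel-verified Lean document; each statement's English description precedes it below -/
import Mathlib

section
/- Let d ≥ 1 be an integer and let γ, r, β > 0 and ν, σ ≥ 0 be real numbers with ν + σ < d < ν + σ + rγ. Then there exist δ₀ > 0 and C > 0 such that for every δ ∈ [0, δ₀), every Λ ≥ 0, every Ω > 0 and every p ∈ ℝ^d one has ∫_{ℝ^d} 1_{|k|>Λ} · |k|^{−ν} |p−k|^{−σ} / (|p−k|^γ + |k|^β + Ω)^r dk ≤ C · Ω^{−r + (d−ν−σ)/γ + δ_Λ} · Λ^{−β δ_Λ}, where δ_Λ := δ if Λ > 1 and δ_Λ := 0 if Λ ≤ 1 (so the factor Λ^{−βδ_Λ} equals 1 for Λ ≤ 1). -/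
open MeasureTheory Metric Set Filter
open scoped ENNReal

namespace Stmt0Aux

variable {d : ℕ}

local notation "𝓔" => EuclideanSpace ℝ (Fin d)

lemma meas_rpow (a : ℝ) : Measurable fun x : 𝓔 => ENNReal.ofReal (‖x‖ ^ (-a)) := by
  fun_prop

/-- Scaling of the Lebesgue integral under dilation. -/
lemma lint_scale (f : 𝓔 → ℝ≥0∞) (hf : Measurable f) {R : ℝ} (hR : 0 < R) :
    ∫⁻ x, f x = ENNReal.ofReal (R ^ d) * ∫⁻ x, f (R • x) := by
  have hfin : Module.finrank ℝ 𝓔 = d := finrank_euclideanSpace_fin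
  have h1 : ∫⁻ x, f (R • x) = ∫⁻ y, f y ∂(Measure.map (R • ·) volume) :=
    (lintegral_map hf (measurable_id.const_smul R)).symm
  rw [Measure.map_addHaar_smul volume hR.ne', hfin, lintegral_smul_measure,
    abs_of_nonneg (by positivity)] at h1
  rw [h1, smul_eq_mul, ← mul_assoc, ← ENNReal.ofReal_mul (by positivity),
    mul_inv_cancel₀ (by positivity), ENNReal.ofReal_one, one_mul]

lemma setLintegral_rpow_closedBall (a : ℝ) {R : ℝ} (hR : 0 < R) :
    ∫⁻ x in closedBall (0 : 𝓔) R, ENNReal.ofReal (‖x‖ ^ (-a))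
      = ENNReal.ofReal (R ^ ((d : ℝ) - a)) *
        ∫⁻ x in closedBall (0 : 𝓔) 1, ENNReal.ofReal (‖x‖ ^ (-a)) := by
  have hme : Measurable ((closedBall (0 : 𝓔) R).indicator
      (fun x => ENNReal.ofReal (‖x‖ ^ (-a)))) :=
    (meas_rpow a).indicator measurableSet_closedBall
  have key : ∀ x : 𝓔, (closedBall (0 : 𝓔) R).indicator
      (fun x => ENNReal.ofReal (‖x‖ ^ (-a))) (R • x)
      = ENNReal.ofReal (R ^ (-a)) *
        (closedBall (0 : 𝓔) 1).indicator (fun x => ENNReal.ofReal (‖x‖ ^ (-a))) x := by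
    intro x
    have hnorm : ‖R • x‖ = R * ‖x‖ := by
      rw [norm_smul, Real.norm_eq_abs, abs_of_nonneg hR.le]
    by_cases hx : x ∈ closedBall (0 : 𝓔) 1
    · have hx' : R • x ∈ closedBall (0 : 𝓔) R := by
        simp only [mem_closedBall, dist_zero_right] at hx ⊢
        rw [hnorm]
        calc R * ‖x‖ ≤ R * 1 := by gcongr
          _ = R := mul_one R
      rw [indicator_of_mem hx', indicator_of_mem hx, hnorm,
        Real.mul_rpow hR.le (norm_nonneg _), ENNReal.ofReal_mul (by positivity)]
    · have hx' : R • x ∉ closedBall (0 : 𝓔) R := by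
        simp only [mem_closedBall, dist_zero_right] at hx ⊢
        rw [hnorm]
        push_neg at hx ⊢
        calc R = R * 1 := (mul_one R).symm
          _ < R * ‖x‖ := by gcongr
      rw [indicator_of_notMem hx', indicator_of_notMem hx, mul_zero]
  rw [← lintegral_indicator measurableSet_closedBall, ← lintegral_indicator measurableSet_closedBall,
    lint_scale _ hme hR]
  simp_rw [key]
  rw [lintegral_const_mul' _ _ ENNReal.ofReal_ne_top, ← mul_assoc,
    ← ENNReal.ofReal_mul (by positivity)]
  congr 2
  rw [← Real.rpow_natCast R d, ← Real.rpow_add hR, sub_eq_add_neg]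

lemma setLintegral_rpow_compl_closedBall (a : ℝ) {R : ℝ} (hR : 0 < R) :
    ∫⁻ x in (closedBall (0 : 𝓔) R)ᶜ, ENNReal.ofReal (‖x‖ ^ (-a))
      = ENNReal.ofReal (R ^ ((d : ℝ) - a)) *
        ∫⁻ x in (closedBall (0 : 𝓔) 1)ᶜ, ENNReal.ofReal (‖x‖ ^ (-a)) := by
  have hme : Measurable (((closedBall (0 : 𝓔) R)ᶜ).indicator
      (fun x => ENNReal.ofReal (‖x‖ ^ (-a)))) :=
    (meas_rpow a).indicator measurableSet_closedBall.compl
  have key : ∀ x : 𝓔, ((closedBall (0 : 𝓔) R)ᶜ).indicator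
      (fun x => ENNReal.ofReal (‖x‖ ^ (-a))) (R • x)
      = ENNReal.ofReal (R ^ (-a)) *
        ((closedBall (0 : 𝓔) 1)ᶜ).indicator (fun x => ENNReal.ofReal (‖x‖ ^ (-a))) x := by
    intro x
    have hnorm : ‖R • x‖ = R * ‖x‖ := by
      rw [norm_smul, Real.norm_eq_abs, abs_of_nonneg hR.le]
    by_cases hx : x ∈ (closedBall (0 : 𝓔) 1)ᶜ
    · have hx' : R • x ∈ (closedBall (0 : 𝓔) R)ᶜ := by
        simp only [mem_compl_iff, mem_closedBall, dist_zero_right] at hx ⊢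
        rw [hnorm]
        push_neg at hx ⊢
        calc R = R * 1 := (mul_one R).symm
          _ < R * ‖x‖ := by gcongr
      rw [indicator_of_mem hx', indicator_of_mem hx, hnorm,
        Real.mul_rpow hR.le (norm_nonneg _), ENNReal.ofReal_mul (by positivity)]
    · have hx' : R • x ∉ (closedBall (0 : 𝓔) R)ᶜ := by
        simp only [mem_compl_iff, mem_closedBall, dist_zero_right, not_not] at hx ⊢
        rw [hnorm]
        calc R * ‖x‖ ≤ R * 1 := by gcongr
          _ = R := mul_one R
      rw [indicator_of_notMem hx', indicator_of_notMem hx, mul_zero]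
  rw [← lintegral_indicator measurableSet_closedBall.compl,
    ← lintegral_indicator measurableSet_closedBall.compl, lint_scale _ hme hR]
  simp_rw [key]
  rw [lintegral_const_mul' _ _ ENNReal.ofReal_ne_top, ← mul_assoc,
    ← ENNReal.ofReal_mul (by positivity)]
  congr 2
  rw [← Real.rpow_natCast R d, ← Real.rpow_add hR, sub_eq_add_neg]





/-- Translation-reflection invariance. -/
lemma lint_transl (g : 𝓔 → ℝ≥0∞) (hg : Measurable g) (p : 𝓔) :
    ∫⁻ k, g (p - k) = ∫⁻ k, g k := by
  have h2 : ∫⁻ k, (fun x => g (p + x)) (-k) = ∫⁻ x, g (p + x) :=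
    (Measure.measurePreserving_neg (volume : Measure 𝓔)).lintegral_comp
      (hg.comp (measurable_const_add p))
  calc ∫⁻ k, g (p - k) = ∫⁻ k, g (p + (-k)) := by simp_rw [sub_eq_add_neg]
    _ = ∫⁻ x, g (p + x) := h2
    _ = ∫⁻ x, g x := lintegral_add_left_eq_self _ p

lemma setLintegral_transl (g : 𝓔 → ℝ≥0∞) (hg : Measurable g) (p : 𝓔)
    (s : Set 𝓔) (hs : MeasurableSet s) :
    ∫⁻ k in (fun k => p - k) ⁻¹' s, g (p - k) = ∫⁻ u in s, g u := by
  have hmp : Measurable fun k : 𝓔 => p - k := measurable_const.sub measurable_id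
  rw [← lintegral_indicator hs, ← lintegral_indicator (hmp hs)]
  rw [← lint_transl (s.indicator g) (hg.indicator hs) p]
  refine lintegral_congr fun k => ?_
  by_cases h : p - k ∈ s
  · rw [indicator_of_mem h, indicator_of_mem (by simpa [Set.mem_preimage] using h)]
  · rw [indicator_of_notMem h, indicator_of_notMem (by simpa [Set.mem_preimage] using h)]

lemma S1_lt_top (hd : 1 ≤ d) {a : ℝ} (ha : 0 ≤ a) (had : a < d) :
    ∫⁻ x in closedBall (0 : 𝓔) 1, ENNReal.ofReal (‖x‖ ^ (-a)) < ∞ := by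
  rcases eq_or_lt_of_le ha with rfl | hapos
  · simp only [neg_zero, Real.rpow_zero, ENNReal.ofReal_one]
    rw [setLIntegral_const]
    rw [one_mul]
    exact measure_closedBall_lt_top
  · set μ := (volume : Measure 𝓔).restrict (closedBall (0:𝓔) 1) with hμ
    have hnn : 0 ≤ᵐ[μ] fun x : 𝓔 => ‖x‖ ^ (-a) :=
      Eventually.of_forall fun x => Real.rpow_nonneg (norm_nonneg _) _
    have hmble : AEMeasurable (fun x : 𝓔 => ‖x‖ ^ (-a)) μ := by fun_prop
    have heq := lintegral_eq_lintegral_meas_le μ hnn hmble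
    rw [hμ] at heq
    rw [show (∫⁻ x in closedBall (0 : 𝓔) 1, ENNReal.ofReal (‖x‖ ^ (-a)))
      = ∫⁻ t in Ioi (0:ℝ), μ {x : 𝓔 | t ≤ ‖x‖ ^ (-a)} from heq]
    set V := volume (ball (0:𝓔) 1) with hV
    have hVfin : V < ∞ := measure_ball_lt_top
    have hsplit : ∫⁻ t in Ioi (0:ℝ), μ {x : 𝓔 | t ≤ ‖x‖ ^ (-a)}
        ≤ (∫⁻ t in Ioc (0:ℝ) 1, μ {x : 𝓔 | t ≤ ‖x‖ ^ (-a)})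
          + ∫⁻ t in Ioi (1:ℝ), μ {x : 𝓔 | t ≤ ‖x‖ ^ (-a)} := by
      refine le_trans (lintegral_mono_set (Ioi_subset_Ioc_union_Ioi (a := (0:ℝ)) (b := 1))) ?_
      exact lintegral_union_le _ _ _
    refine lt_of_le_of_lt hsplit (ENNReal.add_lt_top.2 ⟨?_, ?_⟩)
    · have hb : ∀ t : ℝ, μ {x : 𝓔 | t ≤ ‖x‖ ^ (-a)} ≤ volume (closedBall (0:𝓔) 1) := by
        intro t
        refine le_trans (measure_mono (subset_univ _)) ?_
        rw [hμ, Measure.restrict_apply_univ]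
      calc ∫⁻ t in Ioc (0:ℝ) 1, μ {x : 𝓔 | t ≤ ‖x‖ ^ (-a)}
          ≤ ∫⁻ _ in Ioc (0:ℝ) 1, volume (closedBall (0:𝓔) 1) :=
            lintegral_mono fun t => hb t
        _ = volume (closedBall (0:𝓔) 1) * volume (Ioc (0:ℝ) 1) := setLIntegral_const _ _
        _ < ∞ := by
            refine ENNReal.mul_lt_top measure_closedBall_lt_top ?_
            rw [Real.volume_Ioc]
            exact ENNReal.ofReal_lt_top
    · set c : ℝ := -(a⁻¹ * d) with hc
      have hc1 : c < -1 := by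
        rw [hc, neg_lt_neg_iff, inv_mul_eq_div]
        rw [lt_div_iff₀ hapos, one_mul]
        exact had
      have h2 : ∀ t ∈ Ioi (1:ℝ), μ {x : 𝓔 | t ≤ ‖x‖ ^ (-a)}
          ≤ ENNReal.ofReal (t ^ c) * V := by
        intro t ht
        have ht1 : (1:ℝ) < t := ht
        have ht0 : (0:ℝ) < t := lt_trans one_pos ht1
        have hsub : {x : 𝓔 | t ≤ ‖x‖ ^ (-a)} ⊆ closedBall (0:𝓔) (t ^ (-a⁻¹)) := by
          intro x hx
          simp only [mem_setOf_eq] at hx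
          rcases eq_or_ne x 0 with rfl | hx0
          · exfalso
            rw [norm_zero, Real.zero_rpow (neg_ne_zero.2 hapos.ne')] at hx
            linarith
          · have hkey := Real.rpow_le_rpow_of_nonpos ht0 hx
              (neg_nonpos.2 (inv_nonneg.2 ha))
            rw [← Real.rpow_mul (norm_nonneg x), neg_mul_neg,
              mul_inv_cancel₀ hapos.ne', Real.rpow_one] at hkey
            exact mem_closedBall_zero_iff.2 hkey
        have hrad : (0:ℝ) ≤ t ^ (-a⁻¹) := Real.rpow_nonneg ht0.le _
        calc μ {x : 𝓔 | t ≤ ‖x‖ ^ (-a)} ≤ volume (closedBall (0:𝓔) (t ^ (-a⁻¹))) := by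
              refine le_trans ?_ (measure_mono hsub)
              rw [hμ]
              exact Measure.restrict_le_self _
          _ = ENNReal.ofReal ((t ^ (-a⁻¹)) ^ Module.finrank ℝ 𝓔) * V :=
              Measure.addHaar_closedBall _ _ hrad
          _ = ENNReal.ofReal (t ^ c) * V := by
              rw [finrank_euclideanSpace_fin, ← Real.rpow_natCast (t ^ (-a⁻¹)) d,
                ← Real.rpow_mul ht0.le, hc, neg_mul]
      calc ∫⁻ t in Ioi (1:ℝ), μ {x : 𝓔 | t ≤ ‖x‖ ^ (-a)}
          ≤ ∫⁻ t in Ioi (1:ℝ), ENNReal.ofReal (t ^ c) * V :=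
            setLIntegral_mono' measurableSet_Ioi h2
        _ = (∫⁻ t in Ioi (1:ℝ), ENNReal.ofReal (t ^ c)) * V :=
            lintegral_mul_const' _ _ hVfin.ne
        _ < ∞ := by
            refine ENNReal.mul_lt_top ?_ hVfin
            exact (integrableOn_Ioi_rpow_of_lt hc1 one_pos).setLIntegral_lt_top
    
lemma S2_lt_top (hd : 1 ≤ d) {a : ℝ} (had : (d:ℝ) < a) :
    ∫⁻ x in (closedBall (0 : 𝓔) 1)ᶜ, ENNReal.ofReal (‖x‖ ^ (-a)) < ∞ := by
  have hd0 : (0:ℝ) < d := by exact_mod_cast hd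
  have ha : 0 < a := lt_trans hd0 had
  have hpt : ∀ x ∈ (closedBall (0:𝓔) 1)ᶜ, ENNReal.ofReal (‖x‖ ^ (-a)) ≤
      ENNReal.ofReal ((2:ℝ) ^ a) * ENNReal.ofReal ((1 + ‖x‖) ^ (-a)) := by
    intro x hx
    simp only [mem_compl_iff, mem_closedBall, dist_zero_right, not_le] at hx
    have h1 : (1 + ‖x‖) / 2 ≤ ‖x‖ := by linarith
    have h2 : (0:ℝ) < (1 + ‖x‖) / 2 := by positivity
    have h3 : ‖x‖ ^ (-a) ≤ ((1 + ‖x‖)/2) ^ (-a) :=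
      Real.rpow_le_rpow_of_nonpos h2 h1 (neg_nonpos.2 ha.le)
    have h4 : ((1 + ‖x‖)/2) ^ (-a) = (2:ℝ)^a * (1+‖x‖)^(-a) := by
      rw [Real.div_rpow (by positivity) (by norm_num), Real.rpow_neg (by norm_num : (0:ℝ) ≤ 2),
        division_def, inv_inv, mul_comm]
    rw [← ENNReal.ofReal_mul (by positivity)]
    exact ENNReal.ofReal_le_ofReal (h3.trans_eq h4)
  calc ∫⁻ x in (closedBall (0:𝓔) 1)ᶜ, ENNReal.ofReal (‖x‖ ^ (-a))
      ≤ ∫⁻ x in (closedBall (0:𝓔) 1)ᶜ,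
          ENNReal.ofReal ((2:ℝ)^a) * ENNReal.ofReal ((1+‖x‖)^(-a)) :=
        setLIntegral_mono' measurableSet_closedBall.compl hpt
    _ ≤ ∫⁻ x, ENNReal.ofReal ((2:ℝ)^a) * ENNReal.ofReal ((1+‖x‖)^(-a)) :=
        setLIntegral_le_lintegral _ _
    _ = ENNReal.ofReal ((2:ℝ)^a) * ∫⁻ x, ENNReal.ofReal ((1+‖x‖)^(-a)) :=
        lintegral_const_mul' _ _ ENNReal.ofReal_ne_top
    _ < ∞ := by
        refine ENNReal.mul_lt_top ENNReal.ofReal_lt_top ?_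
        have hfr : (Module.finrank ℝ 𝓔 : ℝ) < a := by
          rw [finrank_euclideanSpace_fin]; exact had
        exact finite_integral_one_add_norm hfr






lemma ae_ne (hd : 1 ≤ d) (p : 𝓔) : ∀ᵐ k : 𝓔 ∂volume, k ≠ p := by
  haveI : Nontrivial 𝓔 := by
    apply Module.nontrivial_of_finrank_pos (R := ℝ)
    rw [finrank_euclideanSpace_fin]
    exact hd
  have h : (volume : Measure 𝓔) {p} = 0 := measure_singleton p
  rw [ae_iff]
  convert h using 2
  ext k; simp

lemma conv_ball (hd : 1 ≤ d) (a b : ℝ) (ha : 0 ≤ a) (hb : 0 ≤ b)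
    (p : 𝓔) {R : ℝ} (hR : 0 < R) :
    ∫⁻ k in {k : 𝓔 | ‖p - k‖ ≤ R}, ENNReal.ofReal (‖k‖ ^ (-a) * ‖p - k‖ ^ (-b))
      ≤ 2 * (∫⁻ x in closedBall (0:𝓔) 1, ENNReal.ofReal (‖x‖ ^ (-(a+b))))
        * ENNReal.ofReal (R ^ ((d:ℝ) - (a+b))) := by
  set A := {k : 𝓔 | ‖p - k‖ ≤ R} with hA
  set T := {k : 𝓔 | ‖k‖ ≤ ‖p - k‖} with hT
  have hmA : MeasurableSet A :=
    measurableSet_le (by fun_prop) (by fun_prop)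
  have hmT : MeasurableSet T :=
    measurableSet_le (by fun_prop) (by fun_prop)
  set K := ∫⁻ x in closedBall (0:𝓔) 1, ENNReal.ofReal (‖x‖ ^ (-(a+b))) with hK
  have part1 : ∫⁻ k in A ∩ T, ENNReal.ofReal (‖k‖ ^ (-a) * ‖p - k‖ ^ (-b))
      ≤ K * ENNReal.ofReal (R ^ ((d:ℝ) - (a+b))) := by
    have hb1 : ∫⁻ k in A ∩ T, ENNReal.ofReal (‖k‖ ^ (-a) * ‖p - k‖ ^ (-b))
        ≤ ∫⁻ k in A ∩ T, ENNReal.ofReal (‖k‖ ^ (-(a+b))) := by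
      refine lintegral_mono_ae ?_
      have h1 : ∀ᵐ k ∂(volume.restrict (A ∩ T)), k ∈ A ∩ T := ae_restrict_mem (hmA.inter hmT)
      have h2 : ∀ᵐ (k : 𝓔) ∂(volume.restrict (A ∩ T)), k ≠ 0 := ae_restrict_of_ae (ae_ne hd 0)
      filter_upwards [h1, h2] with k hk hk0
      have hkpos : (0:ℝ) < ‖k‖ := norm_pos_iff.2 hk0
      have h3 : ‖p - k‖ ^ (-b) ≤ ‖k‖ ^ (-b) :=
        Real.rpow_le_rpow_of_nonpos hkpos hk.2 (neg_nonpos.2 hb)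
      refine ENNReal.ofReal_le_ofReal ?_
      calc ‖k‖ ^ (-a) * ‖p - k‖ ^ (-b) ≤ ‖k‖ ^ (-a) * ‖k‖ ^ (-b) :=
            mul_le_mul_of_nonneg_left h3 (Real.rpow_nonneg (norm_nonneg _) _)
        _ = ‖k‖ ^ (-(a+b)) := by rw [← Real.rpow_add hkpos, neg_add]
    have hsub : A ∩ T ⊆ closedBall (0:𝓔) R := by
      intro k hk
      rw [mem_closedBall, dist_zero_right]
      exact le_trans hk.2 hk.1
    calc ∫⁻ k in A ∩ T, ENNReal.ofReal (‖k‖ ^ (-a) * ‖p - k‖ ^ (-b))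
        ≤ ∫⁻ k in A ∩ T, ENNReal.ofReal (‖k‖ ^ (-(a+b))) := hb1
      _ ≤ ∫⁻ k in closedBall (0:𝓔) R, ENNReal.ofReal (‖k‖ ^ (-(a+b))) := lintegral_mono_set hsub
      _ = ENNReal.ofReal (R ^ ((d:ℝ) - (a+b))) * K := setLintegral_rpow_closedBall _ hR
      _ = K * ENNReal.ofReal (R ^ ((d:ℝ) - (a+b))) := mul_comm _ _
  have part2 : ∫⁻ k in A ∩ Tᶜ, ENNReal.ofReal (‖k‖ ^ (-a) * ‖p - k‖ ^ (-b))
      ≤ K * ENNReal.ofReal (R ^ ((d:ℝ) - (a+b))) := by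
    have hb1 : ∫⁻ k in A ∩ Tᶜ, ENNReal.ofReal (‖k‖ ^ (-a) * ‖p - k‖ ^ (-b))
        ≤ ∫⁻ k in A ∩ Tᶜ, ENNReal.ofReal (‖p - k‖ ^ (-(a+b))) := by
      refine lintegral_mono_ae ?_
      have h1 : ∀ᵐ k ∂(volume.restrict (A ∩ Tᶜ)), k ∈ A ∩ Tᶜ :=
        ae_restrict_mem (hmA.inter hmT.compl)
      have h2 : ∀ᵐ (k : 𝓔) ∂(volume.restrict (A ∩ Tᶜ)), k ≠ p := ae_restrict_of_ae (ae_ne hd p)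
      filter_upwards [h1, h2] with k hk hkp
      have hpk : (0:ℝ) < ‖p - k‖ := by
        rw [norm_pos_iff, sub_ne_zero]
        exact fun h => hkp h.symm
      have hk2 : ‖p - k‖ ≤ ‖k‖ := le_of_lt (by simpa [hT, not_le, mem_compl_iff] using hk.2)
      have h3 : ‖k‖ ^ (-a) ≤ ‖p - k‖ ^ (-a) :=
        Real.rpow_le_rpow_of_nonpos hpk hk2 (neg_nonpos.2 ha)
      refine ENNReal.ofReal_le_ofReal ?_
      calc ‖k‖ ^ (-a) * ‖p - k‖ ^ (-b) ≤ ‖p - k‖ ^ (-a) * ‖p - k‖ ^ (-b) :=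
            mul_le_mul_of_nonneg_right h3 (Real.rpow_nonneg (norm_nonneg _) _)
        _ = ‖p - k‖ ^ (-(a+b)) := by rw [← Real.rpow_add hpk, neg_add]
    have hAeq : A = (fun k : 𝓔 => p - k) ⁻¹' (closedBall (0:𝓔) R) := by
      ext k
      simp [hA, mem_closedBall, dist_zero_right]
    calc ∫⁻ k in A ∩ Tᶜ, ENNReal.ofReal (‖k‖ ^ (-a) * ‖p - k‖ ^ (-b))
        ≤ ∫⁻ k in A ∩ Tᶜ, ENNReal.ofReal (‖p - k‖ ^ (-(a+b))) := hb1
      _ ≤ ∫⁻ k in A, ENNReal.ofReal (‖p - k‖ ^ (-(a+b))) :=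
          lintegral_mono_set inter_subset_left
      _ = ∫⁻ u in closedBall (0:𝓔) R, ENNReal.ofReal (‖u‖ ^ (-(a+b))) := by
          rw [hAeq]
          exact setLintegral_transl _ (meas_rpow _) p _ measurableSet_closedBall
      _ = ENNReal.ofReal (R ^ ((d:ℝ) - (a+b))) * K := setLintegral_rpow_closedBall _ hR
      _ = K * ENNReal.ofReal (R ^ ((d:ℝ) - (a+b))) := mul_comm _ _
  calc ∫⁻ k in A, ENNReal.ofReal (‖k‖ ^ (-a) * ‖p - k‖ ^ (-b))
      = ∫⁻ k in (A ∩ T) ∪ (A ∩ Tᶜ), ENNReal.ofReal (‖k‖ ^ (-a) * ‖p - k‖ ^ (-b)) := by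
        rw [inter_union_compl]
    _ ≤ (∫⁻ k in A ∩ T, ENNReal.ofReal (‖k‖ ^ (-a) * ‖p - k‖ ^ (-b)))
        + ∫⁻ k in A ∩ Tᶜ, ENNReal.ofReal (‖k‖ ^ (-a) * ‖p - k‖ ^ (-b)) :=
        lintegral_union_le _ _ _
    _ ≤ K * ENNReal.ofReal (R ^ ((d:ℝ) - (a+b))) + K * ENNReal.ofReal (R ^ ((d:ℝ) - (a+b))) :=
        add_le_add part1 part2
    _ = 2 * K * ENNReal.ofReal (R ^ ((d:ℝ) - (a+b))) := by ring






lemma conv_ext (a b : ℝ) (ha : 0 ≤ a) (hb : 0 ≤ b)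
    (p : 𝓔) {R : ℝ} (hR : 0 < R) :
    ∫⁻ k in {k : 𝓔 | R < ‖p - k‖}, ENNReal.ofReal (‖k‖ ^ (-a) * ‖p - k‖ ^ (-b))
      ≤ (2 * (∫⁻ x in (closedBall (0:𝓔) 1)ᶜ, ENNReal.ofReal (‖x‖ ^ (-(a+b))))
          + ∫⁻ x in closedBall (0:𝓔) 1, ENNReal.ofReal (‖x‖ ^ (-a)))
        * ENNReal.ofReal (R ^ ((d:ℝ) - (a+b))) := by
  set A := {k : 𝓔 | R < ‖p - k‖} with hA
  set T := {k : 𝓔 | ‖k‖ ≤ ‖p - k‖} with hT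
  set B := closedBall (0:𝓔) R with hB
  have hmA : MeasurableSet A := measurableSet_lt (by fun_prop) (by fun_prop)
  have hmT : MeasurableSet T := measurableSet_le (by fun_prop) (by fun_prop)
  set K2 := ∫⁻ x in (closedBall (0:𝓔) 1)ᶜ, ENNReal.ofReal (‖x‖ ^ (-(a+b))) with hK2
  set K1 := ∫⁻ x in closedBall (0:𝓔) 1, ENNReal.ofReal (‖x‖ ^ (-a)) with hK1
  have hAeq : A = (fun k : 𝓔 => p - k) ⁻¹' Bᶜ := by
    ext k
    simp [hA, hB, mem_closedBall, dist_zero_right, not_le]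
  -- part over A ∩ Tᶜ
  have part0 : ∫⁻ k in A ∩ Tᶜ, ENNReal.ofReal (‖k‖ ^ (-a) * ‖p - k‖ ^ (-b))
      ≤ K2 * ENNReal.ofReal (R ^ ((d:ℝ) - (a+b))) := by
    have hb1 : ∫⁻ k in A ∩ Tᶜ, ENNReal.ofReal (‖k‖ ^ (-a) * ‖p - k‖ ^ (-b))
        ≤ ∫⁻ k in A ∩ Tᶜ, ENNReal.ofReal (‖p - k‖ ^ (-(a+b))) := by
      refine setLIntegral_mono' (hmA.inter hmT.compl) ?_
      intro k hk
      have hpk : (0:ℝ) < ‖p - k‖ := lt_trans hR hk.1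
      have hk2 : ‖p - k‖ ≤ ‖k‖ := le_of_lt (by simpa [hT, not_le, mem_compl_iff] using hk.2)
      have h3 : ‖k‖ ^ (-a) ≤ ‖p - k‖ ^ (-a) :=
        Real.rpow_le_rpow_of_nonpos hpk hk2 (neg_nonpos.2 ha)
      refine ENNReal.ofReal_le_ofReal ?_
      calc ‖k‖ ^ (-a) * ‖p - k‖ ^ (-b) ≤ ‖p - k‖ ^ (-a) * ‖p - k‖ ^ (-b) :=
            mul_le_mul_of_nonneg_right h3 (Real.rpow_nonneg (norm_nonneg _) _)
        _ = ‖p - k‖ ^ (-(a+b)) := by rw [← Real.rpow_add hpk, neg_add]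
    calc ∫⁻ k in A ∩ Tᶜ, ENNReal.ofReal (‖k‖ ^ (-a) * ‖p - k‖ ^ (-b))
        ≤ ∫⁻ k in A ∩ Tᶜ, ENNReal.ofReal (‖p - k‖ ^ (-(a+b))) := hb1
      _ ≤ ∫⁻ k in A, ENNReal.ofReal (‖p - k‖ ^ (-(a+b))) :=
          lintegral_mono_set inter_subset_left
      _ = ∫⁻ u in Bᶜ, ENNReal.ofReal (‖u‖ ^ (-(a+b))) := by
          rw [hAeq]
          exact setLintegral_transl _ (meas_rpow _) p _ measurableSet_closedBall.compl
      _ = ENNReal.ofReal (R ^ ((d:ℝ) - (a+b))) * K2 :=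
          setLintegral_rpow_compl_closedBall _ hR
      _ = K2 * ENNReal.ofReal (R ^ ((d:ℝ) - (a+b))) := mul_comm _ _
  -- part over A ∩ T ∩ B
  have parti : ∫⁻ k in A ∩ T ∩ B, ENNReal.ofReal (‖k‖ ^ (-a) * ‖p - k‖ ^ (-b))
      ≤ K1 * ENNReal.ofReal (R ^ ((d:ℝ) - (a+b))) := by
    have hb1 : ∫⁻ k in A ∩ T ∩ B, ENNReal.ofReal (‖k‖ ^ (-a) * ‖p - k‖ ^ (-b))
        ≤ ∫⁻ k in A ∩ T ∩ B, ENNReal.ofReal (R ^ (-b)) * ENNReal.ofReal (‖k‖ ^ (-a)) := by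
      refine setLIntegral_mono' ((hmA.inter hmT).inter measurableSet_closedBall) ?_
      intro k hk
      have hRpk : R ≤ ‖p - k‖ := le_of_lt hk.1.1
      have h3 : ‖p - k‖ ^ (-b) ≤ R ^ (-b) :=
        Real.rpow_le_rpow_of_nonpos hR hRpk (neg_nonpos.2 hb)
      rw [← ENNReal.ofReal_mul (Real.rpow_nonneg hR.le _)]
      refine ENNReal.ofReal_le_ofReal ?_
      calc ‖k‖ ^ (-a) * ‖p - k‖ ^ (-b) ≤ ‖k‖ ^ (-a) * R ^ (-b) :=
            mul_le_mul_of_nonneg_left h3 (Real.rpow_nonneg (norm_nonneg _) _)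
        _ = R ^ (-b) * ‖k‖ ^ (-a) := mul_comm _ _
    calc ∫⁻ k in A ∩ T ∩ B, ENNReal.ofReal (‖k‖ ^ (-a) * ‖p - k‖ ^ (-b))
        ≤ ∫⁻ k in A ∩ T ∩ B, ENNReal.ofReal (R ^ (-b)) * ENNReal.ofReal (‖k‖ ^ (-a)) := hb1
      _ ≤ ∫⁻ k in B, ENNReal.ofReal (R ^ (-b)) * ENNReal.ofReal (‖k‖ ^ (-a)) :=
          lintegral_mono_set inter_subset_right
      _ = ENNReal.ofReal (R ^ (-b)) * ∫⁻ k in B, ENNReal.ofReal (‖k‖ ^ (-a)) :=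
          lintegral_const_mul' _ _ ENNReal.ofReal_ne_top
      _ = ENNReal.ofReal (R ^ (-b)) * (ENNReal.ofReal (R ^ ((d:ℝ) - a)) * K1) := by
          rw [hB, setLintegral_rpow_closedBall _ hR]
      _ = K1 * (ENNReal.ofReal (R ^ (-b)) * ENNReal.ofReal (R ^ ((d:ℝ) - a))) := by ring
      _ = K1 * ENNReal.ofReal (R ^ ((d:ℝ) - (a+b))) := by
          rw [← ENNReal.ofReal_mul (Real.rpow_nonneg hR.le _), ← Real.rpow_add hR]
          congr 2
          ring
  -- part over A ∩ T ∩ Bᶜ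
  have partii : ∫⁻ k in A ∩ T ∩ Bᶜ, ENNReal.ofReal (‖k‖ ^ (-a) * ‖p - k‖ ^ (-b))
      ≤ K2 * ENNReal.ofReal (R ^ ((d:ℝ) - (a+b))) := by
    have hb1 : ∫⁻ k in A ∩ T ∩ Bᶜ, ENNReal.ofReal (‖k‖ ^ (-a) * ‖p - k‖ ^ (-b))
        ≤ ∫⁻ k in A ∩ T ∩ Bᶜ, ENNReal.ofReal (‖k‖ ^ (-(a+b))) := by
      refine setLIntegral_mono' ((hmA.inter hmT).inter measurableSet_closedBall.compl) ?_
      intro k hk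
      have hkR : R < ‖k‖ := by
        have := hk.2
        simpa [hB, mem_compl_iff, mem_closedBall, dist_zero_right, not_le] using this
      have hkpos : (0:ℝ) < ‖k‖ := lt_trans hR hkR
      have h3 : ‖p - k‖ ^ (-b) ≤ ‖k‖ ^ (-b) :=
        Real.rpow_le_rpow_of_nonpos hkpos hk.1.2 (neg_nonpos.2 hb)
      refine ENNReal.ofReal_le_ofReal ?_
      calc ‖k‖ ^ (-a) * ‖p - k‖ ^ (-b) ≤ ‖k‖ ^ (-a) * ‖k‖ ^ (-b) :=
            mul_le_mul_of_nonneg_left h3 (Real.rpow_nonneg (norm_nonneg _) _)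
        _ = ‖k‖ ^ (-(a+b)) := by rw [← Real.rpow_add hkpos, neg_add]
    calc ∫⁻ k in A ∩ T ∩ Bᶜ, ENNReal.ofReal (‖k‖ ^ (-a) * ‖p - k‖ ^ (-b))
        ≤ ∫⁻ k in A ∩ T ∩ Bᶜ, ENNReal.ofReal (‖k‖ ^ (-(a+b))) := hb1
      _ ≤ ∫⁻ k in Bᶜ, ENNReal.ofReal (‖k‖ ^ (-(a+b))) :=
          lintegral_mono_set inter_subset_right
      _ = ENNReal.ofReal (R ^ ((d:ℝ) - (a+b))) * K2 := by
          rw [hB]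
          exact setLintegral_rpow_compl_closedBall _ hR
      _ = K2 * ENNReal.ofReal (R ^ ((d:ℝ) - (a+b))) := mul_comm _ _
  have hsplit1 : ∫⁻ k in A, ENNReal.ofReal (‖k‖ ^ (-a) * ‖p - k‖ ^ (-b))
      ≤ (∫⁻ k in A ∩ T, ENNReal.ofReal (‖k‖ ^ (-a) * ‖p - k‖ ^ (-b)))
        + ∫⁻ k in A ∩ Tᶜ, ENNReal.ofReal (‖k‖ ^ (-a) * ‖p - k‖ ^ (-b)) := by
    conv_lhs => rw [← inter_union_compl A T]
    exact lintegral_union_le _ _ _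
  have hsplit2 : ∫⁻ k in A ∩ T, ENNReal.ofReal (‖k‖ ^ (-a) * ‖p - k‖ ^ (-b))
      ≤ (∫⁻ k in A ∩ T ∩ B, ENNReal.ofReal (‖k‖ ^ (-a) * ‖p - k‖ ^ (-b)))
        + ∫⁻ k in A ∩ T ∩ Bᶜ, ENNReal.ofReal (‖k‖ ^ (-a) * ‖p - k‖ ^ (-b)) := by
    conv_lhs => rw [← inter_union_compl (A ∩ T) B]
    exact lintegral_union_le _ _ _
  calc ∫⁻ k in A, ENNReal.ofReal (‖k‖ ^ (-a) * ‖p - k‖ ^ (-b))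
      ≤ (∫⁻ k in A ∩ T, ENNReal.ofReal (‖k‖ ^ (-a) * ‖p - k‖ ^ (-b)))
        + ∫⁻ k in A ∩ Tᶜ, ENNReal.ofReal (‖k‖ ^ (-a) * ‖p - k‖ ^ (-b)) := hsplit1
    _ ≤ ((∫⁻ k in A ∩ T ∩ B, ENNReal.ofReal (‖k‖ ^ (-a) * ‖p - k‖ ^ (-b)))
        + ∫⁻ k in A ∩ T ∩ Bᶜ, ENNReal.ofReal (‖k‖ ^ (-a) * ‖p - k‖ ^ (-b)))
        + ∫⁻ k in A ∩ Tᶜ, ENNReal.ofReal (‖k‖ ^ (-a) * ‖p - k‖ ^ (-b)) :=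
        add_le_add_left hsplit2 _
    _ ≤ (K1 * ENNReal.ofReal (R ^ ((d:ℝ) - (a+b)))
          + K2 * ENNReal.ofReal (R ^ ((d:ℝ) - (a+b))))
        + K2 * ENNReal.ofReal (R ^ ((d:ℝ) - (a+b))) :=
        add_le_add (add_le_add parti partii) part0
    _ = (2 * K2 + K1) * ENNReal.ofReal (R ^ ((d:ℝ) - (a+b))) := by ring





lemma core (hd : 1 ≤ d) (γ r ν σ : ℝ) (hγ : 0 < γ) (hr : 0 < r) (hν : 0 ≤ ν) (hσ : 0 ≤ σ)
    (h₁ : ν + σ < d) (h₂ : (d : ℝ) < ν + σ + r * γ) :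
    ∃ δ₀ > (0:ℝ), δ₀ < r ∧ ∃ C > (0:ℝ), ∀ s : ℝ, r - δ₀ ≤ s → s ≤ r →
      ∀ Ω : ℝ, 0 < Ω → ∀ p : 𝓔,
        ∫⁻ k : 𝓔, ENNReal.ofReal (‖k‖ ^ (-ν) * (‖p - k‖ ^ (-σ) * (‖p - k‖ ^ γ + Ω) ^ (-s)))
          ≤ ENNReal.ofReal (C * Ω ^ (((d:ℝ) - ν - σ) / γ - s)) := by
  have hm : (0:ℝ) < ν + σ + r * γ - d := by linarith
  set δ₀ := min r ((ν + σ + r * γ - d) / γ) / 2 with hδ₀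
  have hδ₀pos : 0 < δ₀ := by
    apply div_pos _ two_pos
    exact lt_min hr (div_pos hm hγ)
  have hδ₀r : δ₀ < r := by
    have h1 : δ₀ ≤ r / 2 := by
      rw [hδ₀]
      gcongr
      exact min_le_left _ _
    linarith
  have hγδ : γ * δ₀ ≤ (ν + σ + r * γ - d) / 2 := by
    have h1 : δ₀ ≤ ((ν + σ + r * γ - d) / γ) / 2 := by
      rw [hδ₀]
      gcongr
      exact min_le_right _ _
    have h2 : γ * δ₀ ≤ γ * (((ν + σ + r * γ - d) / γ) / 2) := by gcongr
    calc γ * δ₀ ≤ γ * (((ν + σ + r * γ - d) / γ) / 2) := h2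
      _ = (ν + σ + r * γ - d) / 2 := by field_simp
  have ha₀ : (d:ℝ) < ν + σ + γ * (r - δ₀) := by nlinarith
  set K1 := ∫⁻ x in closedBall (0:𝓔) 1, ENNReal.ofReal (‖x‖ ^ (-(ν+σ))) with hK1
  set K1ν := ∫⁻ x in closedBall (0:𝓔) 1, ENNReal.ofReal (‖x‖ ^ (-ν)) with hK1ν
  set K2 := ∫⁻ x in (closedBall (0:𝓔) 1)ᶜ,
      ENNReal.ofReal (‖x‖ ^ (-(ν + (σ + γ * (r - δ₀))))) with hK2
  have hK1fin : K1 < ∞ := S1_lt_top hd (by positivity) h₁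
  have hK1νfin : K1ν < ∞ := S1_lt_top hd hν (by linarith)
  have hK2fin : K2 < ∞ := S2_lt_top hd (by push_cast; linarith)
  set Ctot : ℝ≥0∞ := 2 * K1 + (2 * K2 + K1ν) with hCtot
  have hCtotfin : Ctot ≠ ∞ := by
    rw [hCtot]
    refine (ENNReal.add_lt_top.2 ⟨?_, ?_⟩).ne
    · exact ENNReal.mul_lt_top (by norm_num) hK1fin
    · exact ENNReal.add_lt_top.2 ⟨ENNReal.mul_lt_top (by norm_num) hK2fin, hK1νfin⟩
  refine ⟨δ₀, hδ₀pos, hδ₀r, Ctot.toReal + 1, by positivity, ?_⟩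
  intro s hs1 hs2 Ω hΩ p
  have hspos : 0 < s := by linarith
  set R := Ω ^ γ⁻¹ with hRdef
  have hRpos : 0 < R := Real.rpow_pos_of_pos hΩ _
  have hRpow : ∀ e : ℝ, R ^ e = Ω ^ (e / γ) := by
    intro e
    rw [hRdef, ← Real.rpow_mul hΩ.le]
    congr 1
    rw [inv_mul_eq_div]
  set A := {k : 𝓔 | ‖p - k‖ ≤ R} with hA
  have hmA : MeasurableSet A := measurableSet_le (by fun_prop) (by fun_prop)
  have hAc : Aᶜ = {k : 𝓔 | R < ‖p - k‖} := by
    ext k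
    simp [hA, not_le]
  set E := ((d:ℝ) - ν - σ) / γ - s with hE
  set X := ENNReal.ofReal (Ω ^ E) with hX
  have convert1 : ENNReal.ofReal (Ω ^ (-s)) * ENNReal.ofReal (R ^ ((d:ℝ) - (ν+σ))) = X := by
    rw [hRpow, ← ENNReal.ofReal_mul (Real.rpow_nonneg hΩ.le _), ← Real.rpow_add hΩ, hX]
    congr 1
    rw [hE]
    ring
  have convert2 : ENNReal.ofReal (R ^ ((d:ℝ) - (ν + (σ + γ * s)))) = X := by
    rw [hRpow, hX]
    congr 1
    rw [hE]
    field_simp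
    ring
  -- inner estimate
  have inner : ∫⁻ k in A,
        ENNReal.ofReal (‖k‖ ^ (-ν) * (‖p - k‖ ^ (-σ) * (‖p - k‖ ^ γ + Ω) ^ (-s)))
      ≤ 2 * K1 * X := by
    have hb1 : ∫⁻ k in A,
          ENNReal.ofReal (‖k‖ ^ (-ν) * (‖p - k‖ ^ (-σ) * (‖p - k‖ ^ γ + Ω) ^ (-s)))
        ≤ ∫⁻ k in A, ENNReal.ofReal (Ω ^ (-s)) * ENNReal.ofReal (‖k‖ ^ (-ν) * ‖p - k‖ ^ (-σ)) := by
      refine setLIntegral_mono' hmA ?_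
      intro k _
      have hXle : (‖p - k‖ ^ γ + Ω) ^ (-s) ≤ Ω ^ (-s) := by
        refine Real.rpow_le_rpow_of_nonpos hΩ ?_ (neg_nonpos.2 hspos.le)
        have : 0 ≤ ‖p - k‖ ^ γ := Real.rpow_nonneg (norm_nonneg _) _
        linarith
      rw [← ENNReal.ofReal_mul (Real.rpow_nonneg hΩ.le _)]
      refine ENNReal.ofReal_le_ofReal ?_
      calc ‖k‖ ^ (-ν) * (‖p - k‖ ^ (-σ) * (‖p - k‖ ^ γ + Ω) ^ (-s))
          = (‖k‖ ^ (-ν) * ‖p - k‖ ^ (-σ)) * (‖p - k‖ ^ γ + Ω) ^ (-s) := by ring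
        _ ≤ (‖k‖ ^ (-ν) * ‖p - k‖ ^ (-σ)) * Ω ^ (-s) :=
            mul_le_mul_of_nonneg_left hXle (by positivity)
        _ = Ω ^ (-s) * (‖k‖ ^ (-ν) * ‖p - k‖ ^ (-σ)) := by ring
    calc ∫⁻ k in A, ENNReal.ofReal (‖k‖ ^ (-ν) * (‖p - k‖ ^ (-σ) * (‖p - k‖ ^ γ + Ω) ^ (-s)))
        ≤ ∫⁻ k in A, ENNReal.ofReal (Ω ^ (-s)) * ENNReal.ofReal (‖k‖ ^ (-ν) * ‖p - k‖ ^ (-σ)) := hb1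
      _ = ENNReal.ofReal (Ω ^ (-s)) * ∫⁻ k in A, ENNReal.ofReal (‖k‖ ^ (-ν) * ‖p - k‖ ^ (-σ)) :=
          lintegral_const_mul' _ _ ENNReal.ofReal_ne_top
      _ ≤ ENNReal.ofReal (Ω ^ (-s)) * (2 * K1 * ENNReal.ofReal (R ^ ((d:ℝ) - (ν+σ)))) := by
          gcongr
          exact conv_ball hd ν σ hν hσ p hRpos
      _ = 2 * K1 * (ENNReal.ofReal (Ω ^ (-s)) * ENNReal.ofReal (R ^ ((d:ℝ) - (ν+σ)))) := by ring
      _ = 2 * K1 * X := by rw [convert1]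
  -- outer estimate
  have outer : ∫⁻ k in Aᶜ,
        ENNReal.ofReal (‖k‖ ^ (-ν) * (‖p - k‖ ^ (-σ) * (‖p - k‖ ^ γ + Ω) ^ (-s)))
      ≤ (2 * K2 + K1ν) * X := by
    have hb1 : ∫⁻ k in Aᶜ,
          ENNReal.ofReal (‖k‖ ^ (-ν) * (‖p - k‖ ^ (-σ) * (‖p - k‖ ^ γ + Ω) ^ (-s)))
        ≤ ∫⁻ k in Aᶜ, ENNReal.ofReal (‖k‖ ^ (-ν) * ‖p - k‖ ^ (-(σ + γ * s))) := by
      refine setLIntegral_mono' hmA.compl ?_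
      intro k hk
      have hkR : R < ‖p - k‖ := by
        have : k ∈ Aᶜ := hk
        rw [hAc] at this
        exact this
      have hpk : (0:ℝ) < ‖p - k‖ := lt_trans hRpos hkR
      have h1 : (‖p - k‖ ^ γ + Ω) ^ (-s) ≤ (‖p - k‖ ^ γ) ^ (-s) := by
        refine Real.rpow_le_rpow_of_nonpos (Real.rpow_pos_of_pos hpk _) ?_
          (neg_nonpos.2 hspos.le)
        linarith
      rw [← Real.rpow_mul (norm_nonneg _)] at h1
      refine ENNReal.ofReal_le_ofReal ?_
      have h2 : ‖p - k‖ ^ (-σ) * (‖p - k‖ ^ γ + Ω) ^ (-s)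
          ≤ ‖p - k‖ ^ (-(σ + γ * s)) := by
        calc ‖p - k‖ ^ (-σ) * (‖p - k‖ ^ γ + Ω) ^ (-s)
            ≤ ‖p - k‖ ^ (-σ) * ‖p - k‖ ^ (γ * (-s)) :=
              mul_le_mul_of_nonneg_left h1 (Real.rpow_nonneg (norm_nonneg _) _)
          _ = ‖p - k‖ ^ (-σ + γ * (-s)) := by rw [← Real.rpow_add hpk]
          _ = ‖p - k‖ ^ (-(σ + γ * s)) := by ring_nf
      exact mul_le_mul_of_nonneg_left h2 (Real.rpow_nonneg (norm_nonneg _) _)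
    have hK2s : (∫⁻ x in (closedBall (0:𝓔) 1)ᶜ,
          ENNReal.ofReal (‖x‖ ^ (-(ν + (σ + γ * s))))) ≤ K2 := by
      rw [hK2]
      refine setLIntegral_mono' measurableSet_closedBall.compl ?_
      intro x hx
      have hx1 : (1:ℝ) < ‖x‖ := by
        simpa [mem_compl_iff, mem_closedBall, dist_zero_right, not_le] using hx
      refine ENNReal.ofReal_le_ofReal ?_
      refine Real.rpow_le_rpow_of_exponent_le hx1.le ?_
      have : γ * (r - δ₀) ≤ γ * s := by gcongr
      linarith
    calc ∫⁻ k in Aᶜ, ENNReal.ofReal (‖k‖ ^ (-ν) * (‖p - k‖ ^ (-σ) * (‖p - k‖ ^ γ + Ω) ^ (-s)))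
        ≤ ∫⁻ k in Aᶜ, ENNReal.ofReal (‖k‖ ^ (-ν) * ‖p - k‖ ^ (-(σ + γ * s))) := hb1
      _ ≤ (2 * (∫⁻ x in (closedBall (0:𝓔) 1)ᶜ,
              ENNReal.ofReal (‖x‖ ^ (-(ν + (σ + γ * s))))) + K1ν)
            * ENNReal.ofReal (R ^ ((d:ℝ) - (ν + (σ + γ * s)))) := by
          rw [hAc]
          exact conv_ext ν (σ + γ * s) hν (by positivity) p hRpos
      _ ≤ (2 * K2 + K1ν) * ENNReal.ofReal (R ^ ((d:ℝ) - (ν + (σ + γ * s)))) := by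
          gcongr
      _ = (2 * K2 + K1ν) * X := by rw [convert2]
  calc ∫⁻ k : 𝓔, ENNReal.ofReal (‖k‖ ^ (-ν) * (‖p - k‖ ^ (-σ) * (‖p - k‖ ^ γ + Ω) ^ (-s)))
      = (∫⁻ k in A, ENNReal.ofReal (‖k‖ ^ (-ν) * (‖p - k‖ ^ (-σ) * (‖p - k‖ ^ γ + Ω) ^ (-s))))
        + ∫⁻ k in Aᶜ, ENNReal.ofReal (‖k‖ ^ (-ν) * (‖p - k‖ ^ (-σ) * (‖p - k‖ ^ γ + Ω) ^ (-s))) :=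
        (lintegral_add_compl _ hmA).symm
    _ ≤ 2 * K1 * X + (2 * K2 + K1ν) * X := add_le_add inner outer
    _ = Ctot * X := by rw [hCtot]; ring
    _ ≤ ENNReal.ofReal (Ctot.toReal + 1) * X := by
        gcongr
        calc Ctot = ENNReal.ofReal Ctot.toReal := (ENNReal.ofReal_toReal hCtotfin).symm
          _ ≤ ENNReal.ofReal (Ctot.toReal + 1) := ENNReal.ofReal_le_ofReal (by linarith)
    _ = ENNReal.ofReal ((Ctot.toReal + 1) * Ω ^ E) := by
        rw [ENNReal.ofReal_mul (by positivity), hX]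


end Stmt0Aux

open MeasureTheory

theorem stmt_0
    (d : ℕ) (hd : 1 ≤ d) (γ r β ν σ : ℝ)
    (hγ : 0 < γ) (hr : 0 < r) (hβ : 0 < β) (hν : 0 ≤ ν) (hσ : 0 ≤ σ)
    (h₁ : ν + σ < d) (h₂ : (d : ℝ) < ν + σ + r * γ) :
    ∃ δ₀ > (0:ℝ), ∃ C > (0:ℝ), ∀ δ : ℝ, 0 ≤ δ → δ < δ₀ →
      ∀ Λ : ℝ, 0 ≤ Λ → ∀ Ω : ℝ, 0 < Ω → ∀ p : EuclideanSpace ℝ (Fin d),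
        (∫⁻ k : EuclideanSpace ℝ (Fin d),
            ENNReal.ofReal ((if Λ < ‖k‖ then (1:ℝ) else 0) * ‖k‖ ^ (-ν) * ‖p - k‖ ^ (-σ) /
              (‖p - k‖ ^ γ + ‖k‖ ^ β + Ω) ^ r))
          ≤ ENNReal.ofReal (C * Ω ^ (-r + ((d : ℝ) - ν - σ) / γ + (if 1 < Λ then δ else 0)) *
              Λ ^ (-(β * (if 1 < Λ then δ else 0)))) := by
  obtain ⟨δ₀, hδ₀pos, hδ₀r, C, hCpos, hcore⟩ := Stmt0Aux.core hd γ r ν σ hγ hr hν hσ h₁ h₂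
  refine ⟨δ₀, hδ₀pos, C, hCpos, ?_⟩
  intro δ hδ0 hδδ Λ hΛ Ω hΩ p
  set t : ℝ := if 1 < Λ then δ else 0 with ht
  have ht0 : 0 ≤ t := by
    rw [ht]
    split
    · exact hδ0
    · exact le_refl 0
  have htδ : t < δ₀ := by
    have : t ≤ δ := by
      rw [ht]; split
      · exact le_refl δ
      · exact hδ0
    linarith
  set s := r - t with hs
  have hs1 : r - δ₀ ≤ s := by rw [hs]; linarith
  have hs2 : s ≤ r := by rw [hs]; linarith
  have hspos : 0 < s := by rw [hs]; linarith
  have hΛt : 0 < Λ ^ (β * t) := by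
    by_cases h1Λ : 1 < Λ
    · exact Real.rpow_pos_of_pos (by linarith) _
    · have ht' : t = 0 := by rw [ht, if_neg h1Λ]
      rw [ht', mul_zero, Real.rpow_zero]
      exact one_pos
  -- pointwise bound
  have hpt : ∀ k : EuclideanSpace ℝ (Fin d),
      ENNReal.ofReal ((if Λ < ‖k‖ then (1:ℝ) else 0) * ‖k‖ ^ (-ν) * ‖p - k‖ ^ (-σ) /
          (‖p - k‖ ^ γ + ‖k‖ ^ β + Ω) ^ r)
        ≤ ENNReal.ofReal (Λ ^ (-(β * t))) *
          ENNReal.ofReal (‖k‖ ^ (-ν) * (‖p - k‖ ^ (-σ) * (‖p - k‖ ^ γ + Ω) ^ (-s))) := by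
    intro k
    rw [← ENNReal.ofReal_mul (Real.rpow_nonneg hΛ _)]
    by_cases hk : Λ < ‖k‖
    · rw [if_pos hk]
      refine ENNReal.ofReal_le_ofReal ?_
      have hkpos : (0:ℝ) < ‖k‖ := lt_of_le_of_lt hΛ hk
      set D := ‖p - k‖ ^ γ + ‖k‖ ^ β + Ω with hD
      have hDpos : 0 < D := by
        have h01 : 0 ≤ ‖p - k‖ ^ γ := Real.rpow_nonneg (norm_nonneg _) _
        have h02 : 0 ≤ ‖k‖ ^ β := Real.rpow_nonneg (norm_nonneg _) _
        rw [hD]; linarith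
      have hG0 : 0 < ‖p - k‖ ^ γ + Ω := by
        have h01 : 0 ≤ ‖p - k‖ ^ γ := Real.rpow_nonneg (norm_nonneg _) _
        linarith
      have hDr : D ^ r = D ^ t * D ^ s := by
        rw [← Real.rpow_add hDpos]
        congr 1
        rw [hs]; ring
      have hfac1 : (‖p - k‖ ^ γ + Ω) ^ s ≤ D ^ s := by
        refine Real.rpow_le_rpow (by linarith) ?_ hspos.le
        have h02 : 0 ≤ ‖k‖ ^ β := Real.rpow_nonneg (norm_nonneg _) _
        rw [hD]; linarith
      have hfac2 : Λ ^ (β * t) ≤ D ^ t := by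
        by_cases h1Λ : 1 < Λ
        · have hΛβ : Λ ^ β ≤ ‖k‖ ^ β := Real.rpow_le_rpow hΛ hk.le hβ.le
          have hkD : ‖k‖ ^ β ≤ D := by
            have h01 : 0 ≤ ‖p - k‖ ^ γ := Real.rpow_nonneg (norm_nonneg _) _
            rw [hD]; linarith
          calc Λ ^ (β * t) = (Λ ^ β) ^ t := Real.rpow_mul hΛ _ _
            _ ≤ D ^ t := Real.rpow_le_rpow (Real.rpow_nonneg hΛ _) (le_trans hΛβ hkD) ht0
        · have ht' : t = 0 := by rw [ht, if_neg h1Λ]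
          rw [ht', mul_zero, Real.rpow_zero, Real.rpow_zero]
      have hmain : Λ ^ (β * t) * (‖p - k‖ ^ γ + Ω) ^ s ≤ D ^ r := by
        rw [hDr]
        exact mul_le_mul hfac2 hfac1 (Real.rpow_nonneg (by linarith) _)
          (Real.rpow_nonneg hDpos.le _)
      have hprodpos : 0 < Λ ^ (β * t) * (‖p - k‖ ^ γ + Ω) ^ s :=
        mul_pos hΛt (Real.rpow_pos_of_pos hG0 _)
      have hinv : (D ^ r)⁻¹ ≤ (Λ ^ (β * t) * (‖p - k‖ ^ γ + Ω) ^ s)⁻¹ :=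
        inv_anti₀ hprodpos hmain
      calc (1:ℝ) * ‖k‖ ^ (-ν) * ‖p - k‖ ^ (-σ) / D ^ r
          = (‖k‖ ^ (-ν) * ‖p - k‖ ^ (-σ)) * (D ^ r)⁻¹ := by
            rw [div_eq_mul_inv, one_mul]
        _ ≤ (‖k‖ ^ (-ν) * ‖p - k‖ ^ (-σ)) * (Λ ^ (β * t) * (‖p - k‖ ^ γ + Ω) ^ s)⁻¹ :=
            mul_le_mul_of_nonneg_left hinv (by positivity)
        _ = Λ ^ (-(β * t)) * (‖k‖ ^ (-ν) * (‖p - k‖ ^ (-σ) * (‖p - k‖ ^ γ + Ω) ^ (-s))) := by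
            rw [mul_inv, Real.rpow_neg hΛ, Real.rpow_neg hG0.le]
            ring
    · rw [if_neg hk, zero_mul, zero_mul, zero_div, ENNReal.ofReal_zero]
      exact zero_le
  calc ∫⁻ k : EuclideanSpace ℝ (Fin d),
        ENNReal.ofReal ((if Λ < ‖k‖ then (1:ℝ) else 0) * ‖k‖ ^ (-ν) * ‖p - k‖ ^ (-σ) /
          (‖p - k‖ ^ γ + ‖k‖ ^ β + Ω) ^ r)
      ≤ ∫⁻ k : EuclideanSpace ℝ (Fin d),
          ENNReal.ofReal (Λ ^ (-(β * t))) *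
          ENNReal.ofReal (‖k‖ ^ (-ν) * (‖p - k‖ ^ (-σ) * (‖p - k‖ ^ γ + Ω) ^ (-s))) :=
        lintegral_mono hpt
    _ = ENNReal.ofReal (Λ ^ (-(β * t))) *
        ∫⁻ k : EuclideanSpace ℝ (Fin d),
          ENNReal.ofReal (‖k‖ ^ (-ν) * (‖p - k‖ ^ (-σ) * (‖p - k‖ ^ γ + Ω) ^ (-s))) :=
        lintegral_const_mul' _ _ ENNReal.ofReal_ne_top
    _ ≤ ENNReal.ofReal (Λ ^ (-(β * t))) *
        ENNReal.ofReal (C * Ω ^ (((d:ℝ) - ν - σ) / γ - s)) := by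
        gcongr
        exact hcore s hs1 hs2 Ω hΩ p
    _ = ENNReal.ofReal (C * Ω ^ (-r + ((d : ℝ) - ν - σ) / γ + t) * Λ ^ (-(β * t))) := by
        rw [← ENNReal.ofReal_mul (Real.rpow_nonneg hΛ _)]
        congr 1
        rw [show ((d:ℝ) - ν - σ) / γ - s = -r + ((d : ℝ) - ν - σ) / γ + t by rw [hs]; ring]
        ring
end

section
/- Let d ≥ 1 be an integer and α ∈ [0, d/2), γ > 0, 0 < β ≤ γ be such that 𝒟 := d − 2α − γ ∈ [0, γ). Let Θ, ω : ℝ^d → [0,∞) satisfy Θ(p) ≥ |p|^γ and ω(q) ≥ (1 + |q|²)^{β/2} for all p, q, and let v : ℝ^d × ℝ^d → ℂ, (p,q) ↦ v_p(q), satisfy |v_p(q)| ≤ c|q|^{−α} for a constant c > 0 and all p, q. Then for every sufficiently small ε > 0 there is a constant C > 0 such that for all Λ ≥ 0, all Ω ≥ 1 and all p ∈ ℝ^d: ∫_{ℝ^d} 1_{|q|>Λ} · |v_p(−q)|² · Ω / ((Θ(p−q) + ω(q) + Ω)(Θ(p−q) + ω(q))) dq ≤ C · Ω^{𝒟/γ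 + ε} · Λ^{−β ε_Λ/2}, where ε_Λ := ε if Λ > 1 and ε_Λ := 0 otherwise. -/
open MeasureTheory Metric Set Module
open scoped ENNReal

section aux

variable {E : Type*} [NormedAddCommGroup E] [NormedSpace ℝ E] [FiniteDimensional ℝ E]
  [MeasurableSpace E] [BorelSpace E] (μ : Measure E) [μ.IsAddHaarMeasure]

lemma aux_F1 {r : ℝ} (h0 : 0 < r) (hr : r < finrank ℝ E) :
    ∫⁻ x, ENNReal.ofReal (if ‖x‖ ≤ 1 then ‖x‖ ^ (-r) else 0) ∂μ < ∞ := by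
  have hn : (0:ℝ) < finrank ℝ E := lt_trans h0 hr
  haveI : Nontrivial E := Module.nontrivial_of_finrank_pos (by exact_mod_cast hn)
  set f : E → ℝ := fun x => if ‖x‖ ≤ 1 then ‖x‖ ^ (-r) else 0 with hf
  have f_nn : 0 ≤ᵐ[μ] f := Filter.Eventually.of_forall fun x => by
    simp only [hf]; split_ifs <;> positivity
  have f_mble : AEMeasurable f μ := by
    apply Measurable.aemeasurable
    exact Measurable.ite (measurableSet_le measurable_norm measurable_const)
      (measurable_norm.pow_const _) measurable_const
  rw [lintegral_eq_lintegral_meas_le μ f_nn f_mble]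
  have hsub1 : ∀ t : ℝ, 0 < t → {a : E | t ≤ f a} ⊆ closedBall 0 1 := by
    intro t ht a ha
    simp only [mem_setOf_eq, hf] at ha
    by_contra hb
    rw [mem_closedBall_zero_iff] at hb
    rw [if_neg hb] at ha
    linarith
  have hsub2 : ∀ t : ℝ, 1 < t → {a : E | t ≤ f a} ⊆ closedBall 0 (t ^ (-r)⁻¹) := by
    intro t ht a ha
    have ht0 : (0:ℝ) < t := lt_trans one_pos ht
    simp only [mem_setOf_eq, hf] at ha
    have hb : ‖a‖ ≤ 1 := by
      by_contra hb; rw [if_neg hb] at ha; linarith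
    rw [if_pos hb] at ha
    have ha0 : 0 < ‖a‖ := by
      rcases eq_or_lt_of_le (norm_nonneg a) with h | h
      · exfalso
        rw [← h, Real.zero_rpow (neg_ne_zero.mpr h0.ne')] at ha
        linarith
      · exact h
    rw [mem_closedBall_zero_iff]
    exact (Real.le_rpow_inv_iff_of_neg ha0 ht0 (by linarith : -r < 0)).mpr ha
  calc ∫⁻ t in Ioi (0:ℝ), μ {a : E | t ≤ f a}
      ≤ ∫⁻ t in Ioc (0:ℝ) 1 ∪ Ioi 1, μ {a : E | t ≤ f a} :=
        lintegral_mono_set Ioi_subset_Ioc_union_Ioi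
    _ ≤ (∫⁻ t in Ioc (0:ℝ) 1, μ {a : E | t ≤ f a}) + ∫⁻ t in Ioi (1:ℝ), μ {a : E | t ≤ f a} :=
        lintegral_union_le _ _ _
    _ < ∞ := by
        refine ENNReal.add_lt_top.2 ⟨?_, ?_⟩
        · calc (∫⁻ t in Ioc (0:ℝ) 1, μ {a : E | t ≤ f a})
              ≤ ∫⁻ _ in Ioc (0:ℝ) 1, μ (closedBall (0:E) 1) :=
                setLIntegral_mono' measurableSet_Ioc fun t ht =>
                  measure_mono (hsub1 t ht.1)
            _ = μ (closedBall (0:E) 1) * volume (Ioc (0:ℝ) 1) := setLIntegral_const _ _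
            _ < ∞ := ENNReal.mul_lt_top measure_closedBall_lt_top (by simp)
        · have hint : ∀ t ∈ Ioi (1:ℝ), μ {a : E | t ≤ f a} ≤
              ENNReal.ofReal (t ^ ((-r)⁻¹ * finrank ℝ E)) * μ (ball (0:E) 1) := by
            intro t ht
            rw [mem_Ioi] at ht
            have ht0 : (0:ℝ) < t := lt_trans one_pos ht
            calc μ {a : E | t ≤ f a} ≤ μ (closedBall 0 (t ^ (-r)⁻¹)) :=
                  measure_mono (hsub2 t ht)
              _ = ENNReal.ofReal ((t ^ (-r)⁻¹) ^ finrank ℝ E) * μ (ball (0:E) 1) :=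
                  Measure.addHaar_closedBall μ 0 (by positivity)
              _ = ENNReal.ofReal (t ^ ((-r)⁻¹ * finrank ℝ E)) * μ (ball (0:E) 1) := by
                  rw [← Real.rpow_natCast (t ^ (-r)⁻¹) (finrank ℝ E), ← Real.rpow_mul ht0.le]
          calc (∫⁻ t in Ioi (1:ℝ), μ {a : E | t ≤ f a})
              ≤ ∫⁻ t in Ioi (1:ℝ), ENNReal.ofReal (t ^ ((-r)⁻¹ * finrank ℝ E)) *
                  μ (ball (0:E) 1) := setLIntegral_mono' measurableSet_Ioi hint
            _ = (∫⁻ t in Ioi (1:ℝ), ENNReal.ofReal (t ^ ((-r)⁻¹ * finrank ℝ E))) *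
                  μ (ball (0:E) 1) := lintegral_mul_const' _ _ measure_ball_lt_top.ne
            _ < ∞ := by
                refine ENNReal.mul_lt_top ?_ measure_ball_lt_top
                refine IntegrableOn.setLIntegral_lt_top ?_
                refine integrableOn_Ioi_rpow_of_lt ?_ one_pos
                have he : (-r)⁻¹ * (finrank ℝ E : ℝ) = -((finrank ℝ E : ℝ) / r) := by
                  rw [← neg_inv, neg_mul, inv_mul_eq_div]
                rw [he, neg_lt_neg_iff]
                exact (one_lt_div h0).mpr hr
  done

lemma aux_F2 {r : ℝ} (hr : (finrank ℝ E : ℝ) < r) :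
    ∫⁻ x, ENNReal.ofReal (if 1 < ‖x‖ then ‖x‖ ^ (-r) else 0) ∂μ < ∞ := by
  have h0 : (0:ℝ) < r := lt_of_le_of_lt (Nat.cast_nonneg _) hr
  have hpt : ∀ x : E, ENNReal.ofReal (if 1 < ‖x‖ then ‖x‖ ^ (-r) else 0) ≤
      ENNReal.ofReal ((2:ℝ) ^ r) * ENNReal.ofReal ((1 + ‖x‖) ^ (-r)) := by
    intro x
    rw [← ENNReal.ofReal_mul (by positivity)]
    apply ENNReal.ofReal_le_ofReal
    split_ifs with hx
    · have hx0 : (0:ℝ) < ‖x‖ := lt_trans one_pos hx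
      have h1 : (1:ℝ) + ‖x‖ ≤ 2 * ‖x‖ := by linarith
      have h2 : ((1:ℝ) + ‖x‖) ^ (-r) ≥ (2 * ‖x‖) ^ (-r) :=
        Real.rpow_le_rpow_of_nonpos (by positivity) h1 (by linarith)
      have h3 : (2 * ‖x‖ : ℝ) ^ (-r) = 2 ^ (-r) * ‖x‖ ^ (-r) :=
        Real.mul_rpow (by norm_num) hx0.le
      calc ‖x‖ ^ (-r) = 2 ^ r * (2 ^ (-r) * ‖x‖ ^ (-r)) := by
            rw [← mul_assoc, ← Real.rpow_add two_pos]
            simp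
        _ ≤ 2 ^ r * (1 + ‖x‖) ^ (-r) := by
            rw [← h3]
            exact mul_le_mul_of_nonneg_left h2 (by positivity)
    · positivity
  calc ∫⁻ x, ENNReal.ofReal (if 1 < ‖x‖ then ‖x‖ ^ (-r) else 0) ∂μ
      ≤ ∫⁻ x, ENNReal.ofReal ((2:ℝ) ^ r) * ENNReal.ofReal ((1 + ‖x‖) ^ (-r)) ∂μ :=
        lintegral_mono hpt
    _ = ENNReal.ofReal ((2:ℝ) ^ r) * ∫⁻ x, ENNReal.ofReal ((1 + ‖x‖) ^ (-r)) ∂μ :=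
        lintegral_const_mul' _ _ ENNReal.ofReal_ne_top
    _ < ∞ := ENNReal.mul_lt_top ENNReal.ofReal_lt_top (finite_integral_one_add_norm hr)

end aux

lemma aux_ratio {D Ω t : ℝ} (hD : 1 ≤ D) (hΩ : 1 ≤ Ω) (ht0 : 0 ≤ t) (ht1 : t ≤ 1) :
    Ω / ((D + Ω) * D) ≤ Ω ^ t / D ^ (1 + t) := by
  have hD0 : (0:ℝ) < D := lt_of_lt_of_le one_pos hD
  have hΩ0 : (0:ℝ) < Ω := lt_of_lt_of_le one_pos hΩ
  have h1 : Ω / (D + Ω) ≤ (Ω / D) ^ t := by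
    rcases le_total D Ω with h | h
    · have h2 : Ω / (D + Ω) ≤ 1 := by
        rw [div_le_one (by linarith)]; linarith
      refine le_trans h2 (Real.one_le_rpow ?_ ht0)
      rw [le_div_iff₀ hD0]; linarith
    · have h2 : Ω / (D + Ω) ≤ Ω / D := by gcongr; linarith
      refine le_trans h2 ?_
      have h3 : Ω / D ≤ 1 := by rw [div_le_one hD0]; exact h
      have h4 := Real.rpow_le_rpow_of_exponent_ge (by positivity) h3 ht1
      rwa [Real.rpow_one] at h4
  calc Ω / ((D + Ω) * D) = (Ω / (D + Ω)) / D := by rw [div_div]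
    _ ≤ (Ω / D) ^ t / D := by gcongr
    _ = Ω ^ t / D ^ (1 + t) := by
        rw [Real.div_rpow hΩ0.le hD0.le, Real.rpow_add hD0, Real.rpow_one, div_div]
        ring_nf

lemma aux_amgm {a b x y : ℝ} (ha : 0 ≤ a) (hb : 1 ≤ b) (hx : 0 ≤ x) (hy : 0 ≤ y) :
    a ^ x * b ^ y ≤ (a + b) ^ (x + y) := by
  have hb0 : (0:ℝ) < b := lt_of_lt_of_le one_pos hb
  have hab : (0:ℝ) < a + b := by linarith
  calc a ^ x * b ^ y ≤ (a + b) ^ x * (a + b) ^ y := by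
        apply mul_le_mul (Real.rpow_le_rpow ha (by linarith) hx)
          (Real.rpow_le_rpow hb0.le (by linarith) hy) (by positivity) (by positivity)
    _ = (a + b) ^ (x + y) := (Real.rpow_add hab x y).symm

lemma aux_div3 {y Dp w F : ℝ} (hy : 0 < y) (hw : 0 ≤ w) (hF : 0 < F) (hD : y * F ≤ Dp) :
    w / Dp ≤ w * y⁻¹ * F⁻¹ := by
  have hDp : (0:ℝ) < Dp := lt_of_lt_of_le (by positivity) hD
  rw [div_le_iff₀ hDp]
  calc w = w * y⁻¹ * F⁻¹ * (y * F) := by field_simp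
    _ ≤ w * y⁻¹ * F⁻¹ * Dp := by
        apply mul_le_mul_of_nonneg_left hD (by positivity)

lemma aux_alg {x : ℝ} (hx : 0 < x) (a e : ℝ) :
    x ^ (-a) * ((x/2) ^ e)⁻¹ = 2 ^ e * x ^ (-(a+e)) := by
  rw [Real.div_rpow hx.le (by norm_num : (0:ℝ) ≤ 2),
    show -(a+e) = -a + -e by ring, Real.rpow_add hx, Real.rpow_neg hx.le e]
  have h2 : (2:ℝ)^e ≠ 0 := by positivity
  have hxe : x^e ≠ 0 := by positivity
  field_simp

lemma aux_alg0 {x : ℝ} (hx : 0 < x) (a e : ℝ) :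
    x ^ (-a) * (x ^ e)⁻¹ = x ^ (-(a+e)) := by
  rw [show -(a+e) = -a + -e by ring, Real.rpow_add hx, Real.rpow_neg hx.le e]
set_option maxHeartbeats 2000000 in
theorem stmt_5
    (d : ℕ) (hd : 1 ≤ d) (α γ β c : ℝ)
    (hα0 : 0 ≤ α) (hα : α < (d : ℝ) / 2) (hγ : 0 < γ) (hβ0 : 0 < β) (hβγ : β ≤ γ)
    (h𝒟0 : 0 ≤ (d : ℝ) - 2 * α - γ) (h𝒟 : (d : ℝ) - 2 * α - γ < γ)
    (Θ ω : EuclideanSpace ℝ (Fin d) → ℝ)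
    (hΘ0 : ∀ p, 0 ≤ Θ p) (hω0 : ∀ q, 0 ≤ ω q)
    (hΘ : ∀ p, ‖p‖ ^ γ ≤ Θ p)
    (hω : ∀ q, (1 + ‖q‖ ^ 2) ^ (β / 2) ≤ ω q)
    (v : EuclideanSpace ℝ (Fin d) → EuclideanSpace ℝ (Fin d) → ℂ)
    (hc : 0 < c) (hv : ∀ p q, ‖v p q‖ ≤ c * ‖q‖ ^ (-α)) :
    ∃ ε₀ > (0:ℝ), ∀ ε : ℝ, 0 < ε → ε < ε₀ → ∃ C > (0:ℝ),
      ∀ Λ : ℝ, 0 ≤ Λ → ∀ Ω : ℝ, 1 ≤ Ω → ∀ p : EuclideanSpace ℝ (Fin d),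
        (∫⁻ q : EuclideanSpace ℝ (Fin d),
            ENNReal.ofReal ((if Λ < ‖q‖ then (1:ℝ) else 0) * ‖v p (-q)‖ ^ 2 * Ω /
              ((Θ (p - q) + ω q + Ω) * (Θ (p - q) + ω q))))
          ≤ ENNReal.ofReal (C * Ω ^ (((d : ℝ) - 2 * α - γ) / γ + ε) *
              Λ ^ (-(β * (if 1 < Λ then ε else 0) / 2))) := by
  classical
  have hd1 : (1:ℝ) ≤ (d:ℝ) := by exact_mod_cast hd
  have hd0 : (0:ℝ) < (d:ℝ) := by linarith
  haveI : Nontrivial (EuclideanSpace ℝ (Fin d)) := by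
    apply Module.nontrivial_of_finrank_pos (R := ℝ)
    rw [finrank_euclideanSpace_fin]; omega
  have hdim : (finrank ℝ (EuclideanSpace ℝ (Fin d)) : ℝ) = (d:ℝ) := by
    rw [finrank_euclideanSpace_fin]
  obtain ⟨𝒟, h𝒟def⟩ : ∃ x : ℝ, x = (d:ℝ) - 2*α - γ := ⟨_, rfl⟩
  rw [← h𝒟def] at h𝒟0 h𝒟
  refine ⟨min (min ((γ - 𝒟)/γ) (1/2)) ((d:ℝ)/(2*γ)), ?_, ?_⟩
  · have h1 : 0 < (γ - 𝒟)/γ := div_pos (by linarith) hγ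
    have h2 : (0:ℝ) < (d:ℝ)/(2*γ) := div_pos hd0 (by positivity)
    exact lt_min (lt_min h1 (by norm_num)) h2
  intro ε hε0 hεlt
  have hε1 : ε < (γ - 𝒟)/γ :=
    lt_of_lt_of_le hεlt (le_trans (min_le_left _ _) (min_le_left _ _))
  rw [sub_div, div_self hγ.ne'] at hε1
  have hε2 : ε < 1/2 :=
    lt_of_lt_of_le hεlt (le_trans (min_le_left _ _) (min_le_right _ _))
  have hε3 : ε < (d:ℝ)/(2*γ) := lt_of_lt_of_le hεlt (min_le_right _ _)
  have hεγ2 : ε * (2*γ) < d := (lt_div_iff₀ (by positivity)).mp hε3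
  obtain ⟨t, htdef⟩ : ∃ x : ℝ, x = 𝒟/γ + ε := ⟨_, rfl⟩
  have ht0 : 0 < t := by rw [htdef]; exact add_pos_of_nonneg_of_pos (div_nonneg h𝒟0 hγ.le) hε0
  have ht1 : t ≤ 1 := by rw [htdef]; linarith
  have hβ4γ : β/(4*γ) ≤ 1/4 := by
    rw [div_le_iff₀ (by positivity)]; linarith
  obtain ⟨eκ, heκdef⟩ : ∃ x : ℝ, x = ε*(1 + β/(4*γ)) := ⟨_, rfl⟩
  have heκ0 : 0 ≤ eκ := by rw [heκdef]; positivity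
  have heκ' : eκ = ε + ε*(β/(4*γ)) := by rw [heκdef]; ring
  have heκ'' : ε*(β/(4*γ)) ≤ ε*(1/4) := mul_le_mul_of_nonneg_left hβ4γ hε0.le
  have heκle : 0 ≤ 1 + t - eκ := by linarith
  obtain ⟨Z, hZdef⟩ : ∃ x : ℝ, x = ε*(1/2 + β/(4*γ)) := ⟨_, rfl⟩
  have hZ0 : 0 ≤ Z := by rw [hZdef]; positivity
  obtain ⟨P₀, hP₀def⟩ : ∃ x : ℝ, x = 2*α + (t + (1 - 2*ε))*γ := ⟨_, rfl⟩
  obtain ⟨P₁, hP₁def⟩ : ∃ x : ℝ, x = 2*α + (t + (1 - ε/2))*γ := ⟨_, rfl⟩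
  obtain ⟨A, hAdef⟩ : ∃ x : ℝ, x = 2*α + (1 + t - eκ)*γ := ⟨_, rfl⟩
  obtain ⟨AZ, hAZdef⟩ : ∃ x : ℝ, x = A + Z*β := ⟨_, rfl⟩
  have hP₀ : P₀ = (d:ℝ) - ε*γ := by
    rw [hP₀def, htdef, h𝒟def]; field_simp; ring
  have hP₁ : P₁ = (d:ℝ) + ε*γ/2 := by
    rw [hP₁def, htdef, h𝒟def]; field_simp; ring
  have hA : A = (d:ℝ) - ε*β/4 := by
    rw [hAdef, htdef, heκdef, h𝒟def]; field_simp; ring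
  have hAZ : AZ = (d:ℝ) + ε*β/4 + ε*β^2/(8*γ)*2 := by
    rw [hAZdef, hA, hZdef]; field_simp; ring
  have hεγpos : 0 < ε*γ := by positivity
  have hεγd : 2*(ε*γ) < (d:ℝ) := by linarith [show ε*(2*γ) = 2*(ε*γ) from by ring]
  have hεβεγ : ε*β ≤ ε*γ := mul_le_mul_of_nonneg_left hβγ hε0.le
  have hεβpos : 0 < ε*β := by positivity
  have hP₀0 : 0 < P₀ := by rw [hP₀]; linarith
  have hP₀d : P₀ < (d:ℝ) := by rw [hP₀]; linarith
  have hP₁d : (d:ℝ) < P₁ := by rw [hP₁]; linarith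
  have hA0 : 0 < A := by rw [hA]; linarith
  have hAd : A < (d:ℝ) := by rw [hA]; linarith
  have hAZd : (d:ℝ) < AZ := by
    rw [hAZ]
    have h7 : 0 < ε*β^2/(8*γ) := by positivity
    linarith
  obtain ⟨K₀, hK₀def⟩ : ∃ x : ℝ, x = c^2 * 2^((t + (1 - 2*ε))*γ) := ⟨_, rfl⟩
  obtain ⟨K₁, hK₁def⟩ : ∃ x : ℝ, x = c^2 * 2^((t + (1 - ε/2))*γ) := ⟨_, rfl⟩
  have hK₀0 : 0 ≤ K₀ := by rw [hK₀def]; positivity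
  have hK₁0 : 0 ≤ K₁ := by rw [hK₁def]; positivity
  obtain ⟨g0, hg0def⟩ : ∃ x : EuclideanSpace ℝ (Fin d) → ℝ,
    x = fun q => if ‖q‖ ≤ 1 then ‖q‖^(-P₀) else 0 := ⟨_, rfl⟩
  obtain ⟨g1, hg1def⟩ : ∃ x : EuclideanSpace ℝ (Fin d) → ℝ,
    x = fun q => if 1 < ‖q‖ then ‖q‖^(-P₁) else 0 := ⟨_, rfl⟩
  obtain ⟨hB, hhBdef⟩ : ∃ x : EuclideanSpace ℝ (Fin d) → ℝ,
    x = fun u => if ‖u‖ ≤ 1 then ‖u‖^(-A) else ‖u‖^(-AZ) := ⟨_, rfl⟩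
  obtain ⟨Sh, hShdef⟩ : ∃ x : EuclideanSpace ℝ (Fin d) → ℝ, x = fun q => (1 + ‖q‖^2)^(-(ε*β/4)) := ⟨_, rfl⟩
  have hg0nn : ∀ q, 0 ≤ g0 q := fun q => by
    simp only [hg0def]; split_ifs <;> positivity
  have hg1nn : ∀ q, 0 ≤ g1 q := fun q => by
    simp only [hg1def]; split_ifs <;> positivity
  have hhBnn : ∀ u, 0 ≤ hB u := fun u => by
    simp only [hhBdef]; split_ifs <;> positivity
  have hShnn : ∀ q, 0 ≤ Sh q := fun q => by simp only [hShdef]; positivity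
  have hSh1 : ∀ q, Sh q ≤ 1 := fun q => by
    simp only [hShdef]
    exact Real.rpow_le_one_of_one_le_of_nonpos (by linarith [sq_nonneg ‖q‖])
      (neg_nonpos.mpr (by positivity))
  -- measurability
  have hmg0 : Measurable fun q : EuclideanSpace ℝ (Fin d) => ENNReal.ofReal (g0 q) := by
    apply Measurable.ennreal_ofReal
    simp only [hg0def]
    exact Measurable.ite (measurableSet_le measurable_norm measurable_const)
      (measurable_norm.pow_const _) measurable_const
  have hmg1 : Measurable fun q : EuclideanSpace ℝ (Fin d) => ENNReal.ofReal (g1 q) := by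
    apply Measurable.ennreal_ofReal
    simp only [hg1def]
    exact Measurable.ite (measurableSet_lt measurable_const measurable_norm)
      (measurable_norm.pow_const _) measurable_const
  have hmhB : Measurable fun u : EuclideanSpace ℝ (Fin d) => ENNReal.ofReal (hB u) := by
    apply Measurable.ennreal_ofReal
    simp only [hhBdef]
    exact Measurable.ite (measurableSet_le measurable_norm measurable_const)
      (measurable_norm.pow_const _) (measurable_norm.pow_const _)
  -- the four basic integrals
  obtain ⟨G₀, hG₀def⟩ : ∃ x : ℝ≥0∞, x = ∫⁻ q : EuclideanSpace ℝ (Fin d), ENNReal.ofReal (g0 q) := ⟨_, rfl⟩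
  obtain ⟨G₁, hG₁def⟩ : ∃ x : ℝ≥0∞, x = ∫⁻ q : EuclideanSpace ℝ (Fin d), ENNReal.ofReal (g1 q) := ⟨_, rfl⟩
  obtain ⟨JH, hJHdef⟩ : ∃ x : ℝ≥0∞, x = ∫⁻ u : EuclideanSpace ℝ (Fin d), ENNReal.ofReal (hB u) := ⟨_, rfl⟩
  have hG₀fin : G₀ < ∞ := by
    rw [hG₀def]; simp only [hg0def]
    exact aux_F1 volume hP₀0 (by rw [finrank_euclideanSpace_fin]; exact_mod_cast hP₀d)
  have hG₁fin : G₁ < ∞ := by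
    rw [hG₁def]; simp only [hg1def]
    exact aux_F2 volume (by rw [finrank_euclideanSpace_fin]; exact_mod_cast hP₁d)
  have hJHfin : JH < ∞ := by
    have hsplit : ∀ u : EuclideanSpace ℝ (Fin d), ENNReal.ofReal (hB u) =
        ENNReal.ofReal (if ‖u‖ ≤ 1 then ‖u‖^(-A) else 0) +
        ENNReal.ofReal (if 1 < ‖u‖ then ‖u‖^(-AZ) else 0) := by
      intro u
      simp only [hhBdef]
      by_cases h : ‖u‖ ≤ 1
      · rw [if_pos h, if_pos h, if_neg (not_lt.mpr h)]; simp
      · rw [if_neg h, if_neg h, if_pos (not_le.mp h)]; simp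
    rw [hJHdef, lintegral_congr hsplit, lintegral_add_left (by
      apply Measurable.ennreal_ofReal
      exact Measurable.ite (measurableSet_le measurable_norm measurable_const)
        (measurable_norm.pow_const _) measurable_const)]
    exact ENNReal.add_lt_top.mpr
      ⟨aux_F1 volume hA0 (by rw [finrank_euclideanSpace_fin]; exact_mod_cast hAd),
       aux_F2 volume (by rw [finrank_euclideanSpace_fin]; exact_mod_cast hAZd)⟩
  obtain ⟨S, hSdef⟩ : ∃ x : ℝ≥0∞,
    x = ENNReal.ofReal K₀ * G₀ + (ENNReal.ofReal K₁ * G₁ + ENNReal.ofReal (c^2) * JH) := ⟨_, rfl⟩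
  have hSfin : S < ∞ := by
    rw [hSdef]
    refine ENNReal.add_lt_top.mpr ⟨?_, ENNReal.add_lt_top.mpr ⟨?_, ?_⟩⟩ <;>
      exact ENNReal.mul_lt_top ENNReal.ofReal_lt_top (by assumption)
  obtain ⟨C, hCdef⟩ : ∃ x : ℝ, x = S.toReal + 1 := ⟨_, rfl⟩
  have hC0 : 0 < C := by rw [hCdef]; positivity
  have hSC : S ≤ ENNReal.ofReal C := by
    calc S = ENNReal.ofReal S.toReal := (ENNReal.ofReal_toReal hSfin.ne).symm
      _ ≤ ENNReal.ofReal C := ENNReal.ofReal_le_ofReal (by rw [hCdef]; linarith)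
  refine ⟨C, hC0, ?_⟩
  intro Λ hΛ Ω hΩ p
  have hΩ0 : (0:ℝ) < Ω := lt_of_lt_of_le one_pos hΩ
  have hΩt0 : (0:ℝ) ≤ Ω ^ t := by positivity
  have hΛ0 : (0:ℝ) ≤ Λ := hΛ
  -- master pointwise bound
  have master : ∀ q : EuclideanSpace ℝ (Fin d), q ≠ 0 → q ≠ p →
      ‖v p (-q)‖ ^ 2 * Ω / ((Θ (p - q) + ω q + Ω) * (Θ (p - q) + ω q)) ≤
      Ω ^ t * (K₀ * g0 q + Sh q * (K₁ * g1 q + c ^ 2 * hB (p - q))) := by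
    intro q hq0 hqp
    have hq0' : (0:ℝ) < ‖q‖ := norm_pos_iff.mpr hq0
    have hu0' : (0:ℝ) < ‖p - q‖ := by
      rw [norm_pos_iff, sub_ne_zero]
      exact fun h => hqp h.symm
    have hω1 : 1 ≤ ω q :=
      le_trans (Real.one_le_rpow (by linarith [sq_nonneg ‖q‖]) (by positivity)) (hω q)
    have hD1 : 1 ≤ Θ (p - q) + ω q := by linarith [hΘ0 (p - q)]
    have hD0 : (0:ℝ) < Θ (p - q) + ω q := by linarith
    have hYnn : 0 ≤ K₁ * g1 q + c ^ 2 * hB (p - q) :=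
      add_nonneg (mul_nonneg hK₁0 (hg1nn q)) (mul_nonneg (by positivity) (hhBnn _))
    have hShYnn : 0 ≤ Sh q * (K₁ * g1 q + c ^ 2 * hB (p - q)) := mul_nonneg (hShnn q) hYnn
    have hv2 : ‖v p (-q)‖ ^ 2 ≤ c ^ 2 * ‖q‖ ^ (-(2*α)) := by
      have h := hv p (-q)
      rw [norm_neg] at h
      calc ‖v p (-q)‖ ^ 2 ≤ (c * ‖q‖ ^ (-α)) ^ 2 :=
            pow_le_pow_left₀ (norm_nonneg _) h 2
        _ = c ^ 2 * ‖q‖ ^ (-(2*α)) := by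
            rw [mul_pow, pow_two (‖q‖ ^ (-α)), ← Real.rpow_add hq0']
            ring_nf
    have hstep1 : ‖v p (-q)‖ ^ 2 * Ω / ((Θ (p - q) + ω q + Ω) * (Θ (p - q) + ω q)) ≤
        c ^ 2 * Ω ^ t * ‖q‖ ^ (-(2*α)) / (Θ (p - q) + ω q) ^ (1 + t) := by
      have hr := aux_ratio hD1 hΩ ht0.le ht1
      calc ‖v p (-q)‖ ^ 2 * Ω / ((Θ (p - q) + ω q + Ω) * (Θ (p - q) + ω q))
          = ‖v p (-q)‖ ^ 2 * (Ω / ((Θ (p - q) + ω q + Ω) * (Θ (p - q) + ω q))) := by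
            rw [mul_div_assoc]
        _ ≤ (c ^ 2 * ‖q‖ ^ (-(2*α))) * (Ω ^ t / (Θ (p - q) + ω q) ^ (1 + t)) :=
            mul_le_mul hv2 hr (by positivity) (by positivity)
        _ = c ^ 2 * Ω ^ t * ‖q‖ ^ (-(2*α)) / (Θ (p - q) + ω q) ^ (1 + t) := by ring
    refine le_trans hstep1 ?_
    by_cases hAB : ‖q‖ ≤ 2 * ‖p - q‖
    · -- region A
      have hΘq : (‖q‖/2) ^ γ ≤ Θ (p - q) :=
        le_trans (Real.rpow_le_rpow (by positivity) (by linarith) hγ.le) (hΘ (p - q))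
      have keyA : ∀ s : ℝ, 0 ≤ s → s ≤ 1 →
          (‖q‖/2) ^ ((t+s)*γ) * ((1 + ‖q‖^2) ^ (β/2)) ^ (1-s) ≤
          (Θ (p - q) + ω q) ^ (1 + t) := by
        intro s hs0 hs1
        have h1 : (‖q‖/2) ^ ((t+s)*γ) ≤ (Θ (p - q)) ^ (t+s) := by
          rw [mul_comm (t+s) γ, Real.rpow_mul (by positivity)]
          exact Real.rpow_le_rpow (by positivity) hΘq (by linarith)
        have h2 : ((1 + ‖q‖^2) ^ (β/2)) ^ (1-s) ≤ (ω q) ^ (1-s) :=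
          Real.rpow_le_rpow (by positivity) (hω q) (by linarith)
        calc (‖q‖/2) ^ ((t+s)*γ) * ((1 + ‖q‖^2) ^ (β/2)) ^ (1-s)
            ≤ (Θ (p - q)) ^ (t+s) * (ω q) ^ (1-s) :=
              mul_le_mul h1 h2 (by positivity) (Real.rpow_nonneg (hΘ0 _) _)
          _ ≤ (Θ (p - q) + ω q) ^ ((t+s)+(1-s)) :=
              aux_amgm (hΘ0 _) hω1 (by linarith) (by linarith)
          _ = (Θ (p - q) + ω q) ^ (1 + t) := by rw [show (t+s)+(1-s) = 1+t by ring]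
      by_cases hq1 : ‖q‖ ≤ 1
      · -- region A, small q
        have hg0q : g0 q = ‖q‖^(-P₀) := by simp only [hg0def]; rw [if_pos hq1]
        have hW : (1:ℝ) ≤ ((1 + ‖q‖^2) ^ (β/2)) ^ (1-(1-2*ε)) :=
          Real.one_le_rpow (Real.one_le_rpow (by linarith [sq_nonneg ‖q‖]) (by positivity))
            (by linarith)
        have hkey2 : (‖q‖/2) ^ ((t+(1-2*ε))*γ) * 1 ≤ (Θ (p - q) + ω q) ^ (1 + t) := by
          refine le_trans ?_ (keyA (1-2*ε) (by linarith) (by linarith))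
          exact mul_le_mul_of_nonneg_left hW (by positivity)
        have hdiv := aux_div3 (by positivity : (0:ℝ) < (‖q‖/2) ^ ((t+(1-2*ε))*γ))
          (by positivity : (0:ℝ) ≤ c ^ 2 * Ω ^ t * ‖q‖ ^ (-(2*α))) one_pos hkey2
        have hmain : c ^ 2 * Ω ^ t * ‖q‖ ^ (-(2*α)) / (Θ (p - q) + ω q) ^ (1 + t) ≤
            Ω ^ t * (K₀ * ‖q‖^(-P₀)) := by
          refine le_trans hdiv (le_of_eq ?_)
          rw [inv_one, mul_one, hK₀def, hP₀def]
          have halg := aux_alg hq0' (2*α) ((t+(1-2*ε))*γ)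
          calc (c ^ 2 * Ω ^ t * ‖q‖ ^ (-(2*α))) * ((‖q‖/2) ^ ((t+(1-2*ε))*γ))⁻¹
              = c ^ 2 * Ω ^ t * (‖q‖ ^ (-(2*α)) * ((‖q‖/2) ^ ((t+(1-2*ε))*γ))⁻¹) := by ring
            _ = c ^ 2 * Ω ^ t * (2 ^ ((t+(1-2*ε))*γ) * ‖q‖ ^ (-(2*α+(t+(1-2*ε))*γ))) := by
                rw [halg]
            _ = Ω ^ t * (c ^ 2 * 2 ^ ((t+(1-2*ε))*γ) * ‖q‖ ^ (-(2*α+(t+(1-2*ε))*γ))) := by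
                ring
        refine le_trans hmain ?_
        rw [hg0q]
        exact mul_le_mul_of_nonneg_left (le_add_of_nonneg_right hShYnn) hΩt0
      · -- region A, large q
        push_neg at hq1
        have hg1q : g1 q = ‖q‖^(-P₁) := by simp only [hg1def]; rw [if_pos hq1]
        have hFpos : (0:ℝ) < ((1 + ‖q‖^2) ^ (β/2)) ^ (1-(1-ε/2)) := by positivity
        have hdiv := aux_div3 (by positivity : (0:ℝ) < (‖q‖/2) ^ ((t+(1-ε/2))*γ))
          (by positivity : (0:ℝ) ≤ c ^ 2 * Ω ^ t * ‖q‖ ^ (-(2*α))) hFpos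
          (keyA (1-ε/2) (by linarith) (by linarith))
        have hFinv : (((1 + ‖q‖^2) ^ (β/2)) ^ (1-(1-ε/2)))⁻¹ = Sh q := by
          rw [show (1:ℝ)-(1-ε/2) = ε/2 by ring, ← Real.rpow_mul (by positivity),
            show β/2*(ε/2) = ε*β/4 by ring]
          simp only [hShdef]
          exact (Real.rpow_neg (by positivity) _).symm
        have hmain : c ^ 2 * Ω ^ t * ‖q‖ ^ (-(2*α)) / (Θ (p - q) + ω q) ^ (1 + t) ≤
            Ω ^ t * (Sh q * (K₁ * ‖q‖^(-P₁))) := by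
          refine le_trans hdiv (le_of_eq ?_)
          rw [hFinv, hK₁def, hP₁def]
          have halg := aux_alg hq0' (2*α) ((t+(1-ε/2))*γ)
          calc c ^ 2 * Ω ^ t * ‖q‖ ^ (-(2*α)) * ((‖q‖/2) ^ ((t+(1-ε/2))*γ))⁻¹ * Sh q
              = c ^ 2 * Ω ^ t * (‖q‖ ^ (-(2*α)) * ((‖q‖/2) ^ ((t+(1-ε/2))*γ))⁻¹) * Sh q := by
                ring
            _ = c ^ 2 * Ω ^ t * (2 ^ ((t+(1-ε/2))*γ) * ‖q‖ ^ (-(2*α+(t+(1-ε/2))*γ))) * Sh q := by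
                rw [halg]
            _ = Ω ^ t * (Sh q * (c ^ 2 * 2 ^ ((t+(1-ε/2))*γ) * ‖q‖ ^ (-(2*α+(t+(1-ε/2))*γ)))) := by
                ring
        refine le_trans hmain ?_
        rw [hg1q]
        apply mul_le_mul_of_nonneg_left ?_ hΩt0
        have h1 : Sh q * (K₁ * ‖q‖^(-P₁)) ≤
            Sh q * (K₁ * ‖q‖^(-P₁) + c ^ 2 * hB (p - q)) :=
          mul_le_mul_of_nonneg_left (le_add_of_nonneg_right
            (mul_nonneg (by positivity) (hhBnn _))) (hShnn q)
        linarith [mul_nonneg hK₀0 (hg0nn q)]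
      -- end A
    · -- region B
      push_neg at hAB
      have huq : ‖p - q‖ ≤ ‖q‖ := by linarith
      have hq2α : ‖q‖ ^ (-(2*α)) ≤ ‖p - q‖ ^ (-(2*α)) :=
        Real.rpow_le_rpow_of_nonpos hu0' huq (by linarith)
      have keyB : ‖p - q‖ ^ ((1+t-eκ)*γ) * ((1 + ‖q‖^2) ^ (β/2)) ^ eκ ≤
          (Θ (p - q) + ω q) ^ (1 + t) := by
        have h1 : ‖p - q‖ ^ ((1+t-eκ)*γ) ≤ (Θ (p - q)) ^ (1+t-eκ) := by
          rw [mul_comm (1+t-eκ) γ, Real.rpow_mul (norm_nonneg _)]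
          exact Real.rpow_le_rpow (by positivity) (hΘ (p - q)) heκle
        have h2 : ((1 + ‖q‖^2) ^ (β/2)) ^ eκ ≤ (ω q) ^ eκ :=
          Real.rpow_le_rpow (by positivity) (hω q) heκ0
        calc ‖p - q‖ ^ ((1+t-eκ)*γ) * ((1 + ‖q‖^2) ^ (β/2)) ^ eκ
            ≤ (Θ (p - q)) ^ (1+t-eκ) * (ω q) ^ eκ :=
              mul_le_mul h1 h2 (by positivity) (Real.rpow_nonneg (hΘ0 _) _)
          _ ≤ (Θ (p - q) + ω q) ^ ((1+t-eκ)+eκ) := aux_amgm (hΘ0 _) hω1 heκle heκ0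
          _ = (Θ (p - q) + ω q) ^ (1 + t) := by rw [show (1+t-eκ)+eκ = 1+t by ring]
      have hFpos : (0:ℝ) < ((1 + ‖q‖^2) ^ (β/2)) ^ eκ := by positivity
      have hdiv := aux_div3 (by positivity : (0:ℝ) < ‖p - q‖ ^ ((1+t-eκ)*γ))
        (by positivity : (0:ℝ) ≤ c ^ 2 * Ω ^ t * ‖p - q‖ ^ (-(2*α))) hFpos keyB
      have hFinv : (((1 + ‖q‖^2) ^ (β/2)) ^ eκ)⁻¹ = Sh q * (1 + ‖q‖^2) ^ (-(Z*β/2)) := by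
        rw [← Real.rpow_mul (by positivity)]
        rw [show ((((1 + ‖q‖^2)) ^ (β/2*eκ) : ℝ))⁻¹ = ((1 + ‖q‖^2) : ℝ) ^ (-(β/2*eκ)) from
          (Real.rpow_neg (by positivity) _).symm]
        simp only [hShdef]
        rw [← Real.rpow_add (by positivity)]
        congr 1
        rw [heκdef, hZdef]; ring
      have halg0 := aux_alg0 hu0' (2*α) ((1+t-eκ)*γ)
      have hstepB : c ^ 2 * Ω ^ t * ‖q‖ ^ (-(2*α)) / (Θ (p - q) + ω q) ^ (1 + t) ≤
          Ω ^ t * Sh q * (c ^ 2 * ‖p - q‖ ^ (-A)) * (1 + ‖q‖^2) ^ (-(Z*β/2)) := by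
        calc c ^ 2 * Ω ^ t * ‖q‖ ^ (-(2*α)) / (Θ (p - q) + ω q) ^ (1 + t)
            ≤ c ^ 2 * Ω ^ t * ‖p - q‖ ^ (-(2*α)) / (Θ (p - q) + ω q) ^ (1 + t) := by
              gcongr
          _ ≤ c ^ 2 * Ω ^ t * ‖p - q‖ ^ (-(2*α)) * (‖p - q‖ ^ ((1+t-eκ)*γ))⁻¹ *
              (((1 + ‖q‖^2) ^ (β/2)) ^ eκ)⁻¹ := hdiv
          _ = Ω ^ t * Sh q * (c ^ 2 * ‖p - q‖ ^ (-A)) * (1 + ‖q‖^2) ^ (-(Z*β/2)) := by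
              rw [hFinv]
              calc c ^ 2 * Ω ^ t * ‖p - q‖ ^ (-(2*α)) * (‖p - q‖ ^ ((1+t-eκ)*γ))⁻¹ *
                  (Sh q * (1 + ‖q‖^2) ^ (-(Z*β/2)))
                  = c ^ 2 * Ω ^ t * (‖p - q‖ ^ (-(2*α)) * (‖p - q‖ ^ ((1+t-eκ)*γ))⁻¹) *
                    (Sh q * (1 + ‖q‖^2) ^ (-(Z*β/2))) := by ring
                _ = c ^ 2 * Ω ^ t * ‖p - q‖ ^ (-(2*α+(1+t-eκ)*γ)) *
                    (Sh q * (1 + ‖q‖^2) ^ (-(Z*β/2))) := by rw [halg0]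
                _ = Ω ^ t * Sh q * (c ^ 2 * ‖p - q‖ ^ (-A)) * (1 + ‖q‖^2) ^ (-(Z*β/2)) := by
                    rw [hAdef]; ring
      refine le_trans hstepB ?_
      by_cases hu1 : ‖p - q‖ ≤ 1
      · have hBu : hB (p - q) = ‖p - q‖^(-A) := by simp only [hhBdef]; rw [if_pos hu1]
        have hone : (1 + ‖q‖^2 : ℝ) ^ (-(Z*β/2)) ≤ 1 :=
          Real.rpow_le_one_of_one_le_of_nonpos (by linarith [sq_nonneg ‖q‖])
            (neg_nonpos.mpr (by positivity))
        calc Ω ^ t * Sh q * (c ^ 2 * ‖p - q‖ ^ (-A)) * (1 + ‖q‖^2) ^ (-(Z*β/2))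
            ≤ Ω ^ t * Sh q * (c ^ 2 * ‖p - q‖ ^ (-A)) * 1 :=
              mul_le_mul_of_nonneg_left hone
                (mul_nonneg (mul_nonneg hΩt0 (hShnn q)) (by positivity))
          _ = Ω ^ t * (Sh q * (c ^ 2 * hB (p - q))) := by rw [hBu]; ring
          _ ≤ Ω ^ t * (K₀ * g0 q + Sh q * (K₁ * g1 q + c ^ 2 * hB (p - q))) := by
              apply mul_le_mul_of_nonneg_left ?_ hΩt0
              have h1 : Sh q * (c ^ 2 * hB (p - q)) ≤
                  Sh q * (K₁ * g1 q + c ^ 2 * hB (p - q)) :=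
                mul_le_mul_of_nonneg_left
                  (le_add_of_nonneg_left (mul_nonneg hK₁0 (hg1nn q))) (hShnn q)
              linarith [mul_nonneg hK₀0 (hg0nn q)]
      · push_neg at hu1
        have hBu : hB (p - q) = ‖p - q‖^(-AZ) := by
          simp only [hhBdef]; rw [if_neg (not_le.mpr hu1)]
        have hZstep : (1 + ‖q‖^2 : ℝ) ^ (-(Z*β/2)) ≤ ‖p - q‖ ^ (-(Z*β)) := by
          calc (1 + ‖q‖^2 : ℝ) ^ (-(Z*β/2)) ≤ (‖q‖^2 : ℝ) ^ (-(Z*β/2)) :=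
              Real.rpow_le_rpow_of_nonpos (by positivity) (by linarith)
                (neg_nonpos.mpr (by positivity))
            _ = ‖q‖ ^ (-(Z*β)) := by
                rw [← Real.rpow_natCast ‖q‖ 2, ← Real.rpow_mul (norm_nonneg q)]
                congr 1
                push_cast
                ring
            _ ≤ ‖p - q‖ ^ (-(Z*β)) :=
              Real.rpow_le_rpow_of_nonpos hu0' huq (neg_nonpos.mpr (by positivity))
        calc Ω ^ t * Sh q * (c ^ 2 * ‖p - q‖ ^ (-A)) * (1 + ‖q‖^2) ^ (-(Z*β/2))
            ≤ Ω ^ t * Sh q * (c ^ 2 * ‖p - q‖ ^ (-A)) * ‖p - q‖ ^ (-(Z*β)) :=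
              mul_le_mul_of_nonneg_left hZstep
                (mul_nonneg (mul_nonneg hΩt0 (hShnn q)) (by positivity))
          _ = Ω ^ t * (Sh q * (c ^ 2 * hB (p - q))) := by
              rw [hBu, hAZdef]
              rw [show -(A + Z*β) = -A + -(Z*β) by ring, Real.rpow_add hu0']
              ring
          _ ≤ Ω ^ t * (K₀ * g0 q + Sh q * (K₁ * g1 q + c ^ 2 * hB (p - q))) := by
              apply mul_le_mul_of_nonneg_left ?_ hΩt0
              have h1 : Sh q * (c ^ 2 * hB (p - q)) ≤
                  Sh q * (K₁ * g1 q + c ^ 2 * hB (p - q)) :=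
                mul_le_mul_of_nonneg_left
                  (le_add_of_nonneg_left (mul_nonneg hK₁0 (hg1nn q))) (hShnn q)
              linarith [mul_nonneg hK₀0 (hg0nn q)]
  -- a.e. avoidance of the two singular points
  have hae : ∀ᵐ q : EuclideanSpace ℝ (Fin d) ∂volume, q ≠ 0 ∧ q ≠ p := by
    have h1 : ∀ᵐ q : EuclideanSpace ℝ (Fin d) ∂volume, q ≠ 0 := by
      refine ae_iff.mpr ?_
      have he : {q : EuclideanSpace ℝ (Fin d) | ¬ q ≠ 0} = {0} := by ext x; simp
      rw [he]; exact measure_singleton 0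
    have h2 : ∀ᵐ q : EuclideanSpace ℝ (Fin d) ∂volume, q ≠ p := by
      refine ae_iff.mpr ?_
      have he : {q : EuclideanSpace ℝ (Fin d) | ¬ q ≠ p} = {p} := by ext x; simp
      rw [he]; exact measure_singleton p
    exact h1.and h2
  -- translation invariance for the hB-part
  have htrans : ∫⁻ q : EuclideanSpace ℝ (Fin d), ENNReal.ofReal (hB (p - q)) = JH := by
    have hstep : (fun q : EuclideanSpace ℝ (Fin d) => ENNReal.ofReal (hB (p - q))) =
        fun q => (fun u => ENNReal.ofReal (hB (-u))) (q - p) := by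
      funext q; simp only [neg_sub]
    rw [hstep, lintegral_sub_right_eq_self (fun u => ENNReal.ofReal (hB (-u))) p, hJHdef]
    have hmneg : Measurable fun u : EuclideanSpace ℝ (Fin d) => ENNReal.ofReal (hB u) := hmhB
    exact (Measure.measurePreserving_neg _).lintegral_comp hmneg
  rcases le_or_gt Λ 1 with hΛ1 | hΛ1
  · -- small Λ : no decay needed
    rw [if_neg (not_lt.mpr hΛ1), show -(β * 0 / 2) = 0 by ring, Real.rpow_zero, mul_one,
      show ((d:ℝ) - 2 * α - γ) / γ + ε = t by rw [htdef, h𝒟def]]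
    have hptw : ∀ᵐ q : EuclideanSpace ℝ (Fin d) ∂volume,
        ENNReal.ofReal ((if Λ < ‖q‖ then (1:ℝ) else 0) * ‖v p (-q)‖ ^ 2 * Ω /
          ((Θ (p - q) + ω q + Ω) * (Θ (p - q) + ω q))) ≤
        ENNReal.ofReal (Ω ^ t) * (ENNReal.ofReal K₀ * ENNReal.ofReal (g0 q) +
          (ENNReal.ofReal K₁ * ENNReal.ofReal (g1 q) +
            ENNReal.ofReal (c ^ 2) * ENNReal.ofReal (hB (p - q)))) := by
      filter_upwards [hae] with q hq
      obtain ⟨hq0, hqp⟩ := hq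
      by_cases hind : Λ < ‖q‖
      · rw [if_pos hind, one_mul]
        have hm := master q hq0 hqp
        have hYnn : 0 ≤ K₁ * g1 q + c ^ 2 * hB (p - q) :=
          add_nonneg (mul_nonneg hK₁0 (hg1nn q)) (mul_nonneg (by positivity) (hhBnn _))
        have hm2 : ‖v p (-q)‖ ^ 2 * Ω / ((Θ (p - q) + ω q + Ω) * (Θ (p - q) + ω q)) ≤
            Ω ^ t * (K₀ * g0 q + (K₁ * g1 q + c ^ 2 * hB (p - q))) := by
          refine le_trans hm (mul_le_mul_of_nonneg_left ?_ hΩt0)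
          have := mul_le_of_le_one_left hYnn (hSh1 q)
          linarith
        refine le_trans (ENNReal.ofReal_le_ofReal hm2) (le_of_eq ?_)
        rw [ENNReal.ofReal_mul hΩt0,
          ENNReal.ofReal_add (mul_nonneg hK₀0 (hg0nn q)) hYnn,
          ENNReal.ofReal_add (mul_nonneg hK₁0 (hg1nn q))
            (mul_nonneg (by positivity) (hhBnn _)),
          ENNReal.ofReal_mul hK₀0, ENNReal.ofReal_mul hK₁0,
          ENNReal.ofReal_mul (by positivity : (0:ℝ) ≤ c ^ 2)]
      · rw [if_neg hind]
        simp
    calc ∫⁻ q : EuclideanSpace ℝ (Fin d),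
          ENNReal.ofReal ((if Λ < ‖q‖ then (1:ℝ) else 0) * ‖v p (-q)‖ ^ 2 * Ω /
            ((Θ (p - q) + ω q + Ω) * (Θ (p - q) + ω q)))
        ≤ ∫⁻ q : EuclideanSpace ℝ (Fin d),
            ENNReal.ofReal (Ω ^ t) * (ENNReal.ofReal K₀ * ENNReal.ofReal (g0 q) +
              (ENNReal.ofReal K₁ * ENNReal.ofReal (g1 q) +
                ENNReal.ofReal (c ^ 2) * ENNReal.ofReal (hB (p - q)))) :=
          lintegral_mono_ae hptw
      _ = ENNReal.ofReal (Ω ^ t) * (ENNReal.ofReal K₀ * G₀ +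
            (ENNReal.ofReal K₁ * G₁ + ENNReal.ofReal (c ^ 2) * JH)) := by
          rw [lintegral_const_mul' _ _ ENNReal.ofReal_ne_top]
          congr 1
          rw [lintegral_add_left (hmg0.const_mul _),
            lintegral_add_left (hmg1.const_mul _),
            lintegral_const_mul' _ _ ENNReal.ofReal_ne_top,
            lintegral_const_mul' _ _ ENNReal.ofReal_ne_top,
            lintegral_const_mul' _ _ ENNReal.ofReal_ne_top,
            htrans, hG₀def, hG₁def]
      _ ≤ ENNReal.ofReal (Ω ^ t) * ENNReal.ofReal C := by
          rw [← hSdef] at *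
          exact mul_le_mul_right hSC _
      _ = ENNReal.ofReal (C * Ω ^ t) := by
          rw [← ENNReal.ofReal_mul hΩt0, mul_comm]
  · -- large Λ : with decay
    rw [if_pos hΛ1,
      show ((d:ℝ) - 2 * α - γ) / γ + ε = t by rw [htdef, h𝒟def]]
    have hΛpos : (0:ℝ) < Λ := by linarith
    have hΩΛ0 : (0:ℝ) ≤ Ω ^ t * Λ ^ (-(β * ε / 2)) := by positivity
    have hptw : ∀ᵐ q : EuclideanSpace ℝ (Fin d) ∂volume,
        ENNReal.ofReal ((if Λ < ‖q‖ then (1:ℝ) else 0) * ‖v p (-q)‖ ^ 2 * Ω /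
          ((Θ (p - q) + ω q + Ω) * (Θ (p - q) + ω q))) ≤
        ENNReal.ofReal (Ω ^ t * Λ ^ (-(β * ε / 2))) *
          (ENNReal.ofReal K₁ * ENNReal.ofReal (g1 q) +
            ENNReal.ofReal (c ^ 2) * ENNReal.ofReal (hB (p - q))) := by
      filter_upwards [hae] with q hq
      obtain ⟨hq0, hqp⟩ := hq
      by_cases hind : Λ < ‖q‖
      · rw [if_pos hind, one_mul]
        have hm := master q hq0 hqp
        have hq1 : (1:ℝ) < ‖q‖ := lt_trans hΛ1 hind
        have hg0z : g0 q = 0 := by simp only [hg0def]; rw [if_neg (not_le.mpr hq1)]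
        have hYnn : 0 ≤ K₁ * g1 q + c ^ 2 * hB (p - q) :=
          add_nonneg (mul_nonneg hK₁0 (hg1nn q)) (mul_nonneg (by positivity) (hhBnn _))
        have hShΛ : Sh q ≤ Λ ^ (-(β * ε / 2)) := by
          simp only [hShdef]
          have hΛq : Λ ^ 2 ≤ 1 + ‖q‖ ^ 2 := by
            have := pow_le_pow_left₀ hΛ0 hind.le 2
            linarith
          calc ((1:ℝ) + ‖q‖ ^ 2) ^ (-(ε * β / 4)) ≤ (Λ ^ 2 : ℝ) ^ (-(ε * β / 4)) :=
              Real.rpow_le_rpow_of_nonpos (by positivity) hΛq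
                (neg_nonpos.mpr (by positivity))
            _ = Λ ^ (-(β * ε / 2)) := by
                rw [← Real.rpow_natCast Λ 2, ← Real.rpow_mul hΛ0]
                congr 1
                push_cast
                ring
        have hm2 : ‖v p (-q)‖ ^ 2 * Ω / ((Θ (p - q) + ω q + Ω) * (Θ (p - q) + ω q)) ≤
            Ω ^ t * Λ ^ (-(β * ε / 2)) * (K₁ * g1 q + c ^ 2 * hB (p - q)) := by
          refine le_trans hm ?_
          rw [hg0z]
          calc Ω ^ t * (K₀ * 0 + Sh q * (K₁ * g1 q + c ^ 2 * hB (p - q)))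
              = Ω ^ t * (Sh q * (K₁ * g1 q + c ^ 2 * hB (p - q))) := by ring
            _ ≤ Ω ^ t * (Λ ^ (-(β * ε / 2)) * (K₁ * g1 q + c ^ 2 * hB (p - q))) :=
                mul_le_mul_of_nonneg_left (mul_le_mul_of_nonneg_right hShΛ hYnn) hΩt0
            _ = Ω ^ t * Λ ^ (-(β * ε / 2)) * (K₁ * g1 q + c ^ 2 * hB (p - q)) := by ring
        refine le_trans (ENNReal.ofReal_le_ofReal hm2) (le_of_eq ?_)
        rw [ENNReal.ofReal_mul hΩΛ0,
          ENNReal.ofReal_add (mul_nonneg hK₁0 (hg1nn q))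
            (mul_nonneg (by positivity) (hhBnn _)),
          ENNReal.ofReal_mul hK₁0,
          ENNReal.ofReal_mul (by positivity : (0:ℝ) ≤ c ^ 2)]
      · rw [if_neg hind]
        simp
    calc ∫⁻ q : EuclideanSpace ℝ (Fin d),
          ENNReal.ofReal ((if Λ < ‖q‖ then (1:ℝ) else 0) * ‖v p (-q)‖ ^ 2 * Ω /
            ((Θ (p - q) + ω q + Ω) * (Θ (p - q) + ω q)))
        ≤ ∫⁻ q : EuclideanSpace ℝ (Fin d),
            ENNReal.ofReal (Ω ^ t * Λ ^ (-(β * ε / 2))) *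
              (ENNReal.ofReal K₁ * ENNReal.ofReal (g1 q) +
                ENNReal.ofReal (c ^ 2) * ENNReal.ofReal (hB (p - q))) :=
          lintegral_mono_ae hptw
      _ = ENNReal.ofReal (Ω ^ t * Λ ^ (-(β * ε / 2))) *
            (ENNReal.ofReal K₁ * G₁ + ENNReal.ofReal (c ^ 2) * JH) := by
          rw [lintegral_const_mul' _ _ ENNReal.ofReal_ne_top]
          congr 1
          rw [lintegral_add_left (hmg1.const_mul _),
            lintegral_const_mul' _ _ ENNReal.ofReal_ne_top,
            lintegral_const_mul' _ _ ENNReal.ofReal_ne_top,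
            htrans, hG₁def]
      _ ≤ ENNReal.ofReal (Ω ^ t * Λ ^ (-(β * ε / 2))) * ENNReal.ofReal C := by
          refine mul_le_mul_right (le_trans ?_ hSC) _
          rw [hSdef]
          exact le_add_self
      _ = ENNReal.ofReal (C * Ω ^ t * Λ ^ (-(β * ε / 2))) := by
          rw [← ENNReal.ofReal_mul hΩΛ0,
            show Ω ^ t * Λ ^ (-(β * ε / 2)) * C = C * Ω ^ t * Λ ^ (-(β * ε / 2)) by ring]
end

section
/- Let γ > 0, 0 < β ≤ γ and 0 ≤ 𝒟 < γβ²/(β² + 2γ²), and define u : ℝ → ℝ by u(x) := (βx − 𝒟)/γ. Then there exist real numbers s > 0 and σ ≥ 0 such that all of the following hold: u(s) < 1; u(u(s)) > 0; u(σ) < 1; s − u(s) + (σ − u(σ) − 1)/2 < 0; max(0, 1−s) + max(0, 1−σ)/2 < 1; and max(0, 1−s) + s − u(s) < 1. -/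
theorem stmt_8
    (γ β 𝒟 : ℝ) (hγ : 0 < γ) (hβ0 : 0 < β) (hβγ : β ≤ γ)
    (h𝒟0 : 0 ≤ 𝒟) (h𝒟 : 𝒟 < γ * β ^ 2 / (β ^ 2 + 2 * γ ^ 2)) :
    ∃ s σ : ℝ, 0 < s ∧ 0 ≤ σ ∧
      (β * s - 𝒟) / γ < 1 ∧
      0 < (β * ((β * s - 𝒟) / γ) - 𝒟) / γ ∧
      (β * σ - 𝒟) / γ < 1 ∧
      s - (β * s - 𝒟) / γ + (σ - (β * σ - 𝒟) / γ - 1) / 2 < 0 ∧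
      max 0 (1 - s) + max 0 (1 - σ) / 2 < 1 ∧
      max 0 (1 - s) + s - (β * s - 𝒟) / γ < 1 := by
  have hγ' : (γ:ℝ) ≠ 0 := hγ.ne'
  have hden : (0:ℝ) < β ^ 2 + 2 * γ ^ 2 := by positivity
  have key : 𝒟 * (β ^ 2 + 2 * γ ^ 2) < γ * β ^ 2 := (lt_div_iff₀ hden).mp h𝒟
  have h3β : 3 * 𝒟 < β := by nlinarith [sq_nonneg (β - γ), sq_nonneg β, sq_nonneg γ]
  have hmax1 : max (0:ℝ) (1 - 0) = 1 := by norm_num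
  rcases eq_or_lt_of_le hβγ with heq | hlt
  · -- β = γ
    subst heq
    refine ⟨5/6, 0, by norm_num, le_refl 0, ?_, ?_, ?_, ?_, ?_, ?_⟩
    · rw [div_lt_one hγ]; linarith
    · apply div_pos _ hγ
      rw [sub_pos]
      have h1 : β * ((β * (5/6) - 𝒟) / β) = β * (5/6) - 𝒟 := by field_simp
      rw [h1]; linarith
    · rw [div_lt_one hγ]; linarith
    · have h1 : (β * (5/6) - 𝒟) / β = 5/6 - 𝒟 / β := by field_simp
      have h2 : (β * 0 - 𝒟) / β = - (𝒟 / β) := by field_simp; ring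
      rw [h1, h2]
      have hd : 𝒟 / β < 1/3 := by rw [div_lt_iff₀ hβ0]; linarith
      have hd0 : 0 ≤ 𝒟 / β := div_nonneg h𝒟0 hβ0.le
      linarith
    · rw [hmax1]
      have : max (0:ℝ) (1 - 5/6) = 1/6 := by norm_num
      rw [this]; norm_num
    · have : max (0:ℝ) (1 - 5/6) = 1/6 := by norm_num
      rw [this]
      have hd : 𝒟 / β < 1/3 := by rw [div_lt_iff₀ hβ0]; linarith
      have h1 : (β * (5/6) - 𝒟) / β = 5/6 - 𝒟 / β := by field_simp
      rw [h1]; linarith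
  · -- β < γ
    have hgb : 0 < γ - β := by linarith
    set L : ℝ := max (1/2) ((β + γ) * 𝒟 / β ^ 2) with hL
    set U : ℝ := min ((γ + 𝒟) / β) ((γ - 3 * 𝒟) / (2 * (γ - β))) with hU
    have hβ2 : (0:ℝ) < β ^ 2 := by positivity
    have hLU : L < U := by
      apply max_lt <;> apply lt_min
      · rw [lt_div_iff₀ hβ0]; linarith
      · rw [lt_div_iff₀ (by positivity : (0:ℝ) < 2 * (γ - β))]; linarith
      · rw [div_lt_div_iff₀ hβ2 hβ0]
        nlinarith [mul_pos hβ0 (mul_pos hγ (show (0:ℝ) < β - 𝒟 by linarith))]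
      · rw [div_lt_div_iff₀ hβ2 (by positivity : (0:ℝ) < 2 * (γ - β))]; nlinarith
    set s : ℝ := (L + U) / 2 with hs
    have hsL : L < s := by rw [hs]; linarith
    have hsU : s < U := by rw [hs]; linarith
    have hs1 : 1/2 < s := lt_of_le_of_lt (le_max_left _ _) hsL
    have hs2 : (β + γ) * 𝒟 / β ^ 2 < s := lt_of_le_of_lt (le_max_right _ _) hsL
    have hs3 : s < (γ + 𝒟) / β := lt_of_lt_of_le hsU (min_le_left _ _)
    have hs4 : s < (γ - 3 * 𝒟) / (2 * (γ - β)) := lt_of_lt_of_le hsU (min_le_right _ _)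
    have hs2' : (β + γ) * 𝒟 < β ^ 2 * s := by
      have := (div_lt_iff₀ hβ2).mp hs2; linarith
    have hs3' : β * s < γ + 𝒟 := by
      have := (lt_div_iff₀ hβ0).mp hs3; linarith
    have hs4' : 2 * (γ - β) * s < γ - 3 * 𝒟 := by
      have := (lt_div_iff₀ (by positivity : (0:ℝ) < 2 * (γ - β))).mp hs4; linarith
    have hus : 0 < β * s - 𝒟 := by nlinarith
    clear hs hsL hsU hLU
    clear_value s
    clear hL hU
    clear_value L U
    clear hs2 hs3 hs4
    refine ⟨s, 0, by linarith, le_refl 0, ?_, ?_, ?_, ?_, ?_, ?_⟩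
    · rw [div_lt_one hγ]; linarith
    · apply div_pos _ hγ
      rw [sub_pos, ← mul_div_assoc, lt_div_iff₀ hγ]
      nlinarith
    · rw [div_lt_one hγ]; linarith
    · have h1 : s - (β * s - 𝒟) / γ = ((γ - β) * s + 𝒟) / γ := by field_simp; ring
      have h2 : (β * 0 - 𝒟) / γ = - (𝒟 / γ) := by field_simp; ring
      rw [h1, h2]
      have ha : ((γ - β) * s + 𝒟) / γ < (γ - 𝒟) / (2 * γ) := by
        rw [div_lt_div_iff₀ hγ (by positivity)]; nlinarith
      have hc : 𝒟 / γ + (γ - 𝒟) / γ = 1 := by field_simp; ring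
      have hd : (γ - 𝒟) / (2 * γ) * 2 = (γ - 𝒟) / γ := by field_simp
      linarith
    · rw [hmax1]
      have hm : max (0:ℝ) (1 - s) < 1/2 := max_lt (by norm_num) (by linarith)
      linarith
    · rcases le_total s 1 with h1 | h1
      · rw [max_eq_right (by linarith : (0:ℝ) ≤ 1 - s)]
        have : 0 < (β * s - 𝒟) / γ := div_pos hus hγ
        linarith
      · rw [max_eq_left (by linarith : 1 - s ≤ (0:ℝ)), zero_add]
        have : s - (β * s - 𝒟) / γ = ((γ - β) * s + 𝒟) / γ := by field_simp; ring
        rw [this, div_lt_one hγ]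
        linarith
end

section
/- Let d ≥ 1 be an integer and μ > 0. Then for all p, k ∈ ℝ^d one has μ²(|k|² + 1) ≤ (1 + μ^{−2})(|p|² + μ²)(|k + p|² + μ²). -/
theorem stmt_12
    (d : ℕ) (hd : 1 ≤ d) (μ : ℝ) (hμ : 0 < μ)
    (p k : EuclideanSpace ℝ (Fin d)) :
    μ ^ 2 * (‖k‖ ^ 2 + 1) ≤ (1 + (μ ^ 2)⁻¹) * (‖p‖ ^ 2 + μ ^ 2) * (‖k + p‖ ^ 2 + μ ^ 2) := by
  set a := ‖k‖ with ha
  set b := ‖p‖ with hb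
  set c := ‖k + p‖ with hc
  have ha0 : 0 ≤ a := norm_nonneg _
  have hb0 : 0 ≤ b := norm_nonneg _
  have hc0 : 0 ≤ c := norm_nonneg _
  have h1 : a ≤ c + b := by
    calc a = ‖(k + p) - p‖ := by rw [ha]; congr 1; abel
    _ ≤ c + b := norm_sub_le _ _
  have h2 : b ≤ c + a := by
    calc b = ‖(k + p) - k‖ := by rw [hb]; congr 1; abel
    _ ≤ c + a := norm_sub_le _ _
  have htri : (a - b) ^ 2 ≤ c ^ 2 := by nlinarith
  have hμ2 : (0:ℝ) < μ ^ 2 := by positivity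
  rw [show (1 + (μ ^ 2)⁻¹) = (μ ^ 2 + 1) / μ ^ 2 by field_simp,
    div_mul_eq_mul_div, div_mul_eq_mul_div, le_div_iff₀ hμ2]
  -- goal: μ^2 * (a^2 + 1) * μ^2 ≤ (μ^2+1) * (b^2+μ^2) * (c^2+μ^2)
  have hmono : (μ ^ 2 + 1) * (b ^ 2 + μ ^ 2) * ((a - b) ^ 2 + μ ^ 2)
      ≤ (μ ^ 2 + 1) * (b ^ 2 + μ ^ 2) * (c ^ 2 + μ ^ 2) := by
    have h := mul_le_mul_of_nonneg_left htri
      (by positivity : (0:ℝ) ≤ (μ ^ 2 + 1) * (b ^ 2 + μ ^ 2))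
    nlinarith [h]
  refine le_trans ?_ hmono
  have hid : (b ^ 2 + μ ^ 2) * ((a - b) ^ 2 + μ ^ 2)
      = (a * b - b ^ 2 - μ ^ 2) ^ 2 + μ ^ 2 * a ^ 2 := by ring
  rcases le_or_gt 0 (a * b - b ^ 2) with hs | hs
  · nlinarith [sq_nonneg (a * b - b ^ 2 - μ ^ 2),
      mul_nonneg hμ2.le (sq_nonneg (a * b - b ^ 2 - μ ^ 2)),
      mul_nonneg hμ2.le (sq_nonneg (a - 2 * b)),
      mul_nonneg hμ2.le hs, mul_nonneg hs hs,
      mul_nonneg hμ2.le (sq_nonneg a)]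
  · nlinarith [mul_nonneg hμ2.le (sq_nonneg (a * b - b ^ 2 - μ ^ 2)),
      mul_nonneg hμ2.le (sq_nonneg a),
      mul_pos (neg_pos.mpr hs) hμ2, mul_pos (neg_pos.mpr hs) (neg_pos.mpr hs)]
end

section
/- Let d ≥ 1 be an integer and μ > 0. Then for all p, k ∈ ℝ^d one has (|p|² + μ²)^{−1/4} · (|p + k|² + μ²)^{−1/4} ≤ (μ^{−2} + μ^{−4})^{1/4} · (|k|² + 1)^{−1/4}. -/
theorem stmt_13
    (d : ℕ) (hd : 1 ≤ d) (μ : ℝ) (hμ : 0 < μ)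
    (p k : EuclideanSpace ℝ (Fin d)) :
    (‖p‖ ^ 2 + μ ^ 2) ^ (-(1 / 4 : ℝ)) * (‖p + k‖ ^ 2 + μ ^ 2) ^ (-(1 / 4 : ℝ)) ≤
      ((μ ^ 2)⁻¹ + (μ ^ 4)⁻¹) ^ ((1 : ℝ) / 4) * (‖k‖ ^ 2 + 1) ^ (-(1 / 4 : ℝ)) := by
  set a := ‖p‖ with ha
  set b := ‖p + k‖ with hb
  set c := ‖k‖ with hc
  have hk : c ≤ a + b := by
    have : k = (p + k) - p := by abel
    calc c = ‖(p + k) - p‖ := by rw [← this]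
    _ ≤ ‖p + k‖ + ‖p‖ := norm_sub_le _ _
    _ = a + b := by ring
  have ha0 : 0 ≤ a := norm_nonneg _
  have hb0 : 0 ≤ b := norm_nonneg _
  have hc0 : 0 ≤ c := norm_nonneg _
  have hX : 0 < a ^ 2 + μ ^ 2 := by positivity
  have hY : 0 < b ^ 2 + μ ^ 2 := by positivity
  have hW : 0 < c ^ 2 + 1 := by positivity
  have key1 : μ ^ 2 * c ^ 2 ≤ (a ^ 2 + μ ^ 2) * (b ^ 2 + μ ^ 2) := by
    nlinarith [sq_nonneg (a * b - μ ^ 2), sq_nonneg (a + b), mul_le_mul hk hk hc0 (by linarith)]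
  have key2 : μ ^ 4 ≤ (a ^ 2 + μ ^ 2) * (b ^ 2 + μ ^ 2) := by
    nlinarith [sq_nonneg a, sq_nonneg b, mul_nonneg (sq_nonneg a) (sq_nonneg b), sq_nonneg μ]
  have hcinv : 0 < (μ ^ 2)⁻¹ + (μ ^ 4)⁻¹ := by positivity
  have hmain : c ^ 2 + 1 ≤ ((μ ^ 2)⁻¹ + (μ ^ 4)⁻¹) * ((a ^ 2 + μ ^ 2) * (b ^ 2 + μ ^ 2)) := by
    have h2 : (0:ℝ) < μ ^ 2 := by positivity
    have h4 : (0:ℝ) < μ ^ 4 := by positivity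
    have e1 : c ^ 2 ≤ (μ ^ 2)⁻¹ * ((a ^ 2 + μ ^ 2) * (b ^ 2 + μ ^ 2)) := by
      rw [← mul_le_mul_iff_right₀ h2]
      calc μ ^ 2 * c ^ 2 ≤ (a ^ 2 + μ ^ 2) * (b ^ 2 + μ ^ 2) := key1
      _ = μ ^ 2 * ((μ ^ 2)⁻¹ * ((a ^ 2 + μ ^ 2) * (b ^ 2 + μ ^ 2))) := by
          field_simp
    have e2 : (1:ℝ) ≤ (μ ^ 4)⁻¹ * ((a ^ 2 + μ ^ 2) * (b ^ 2 + μ ^ 2)) := by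
      rw [← mul_le_mul_iff_right₀ h4]
      calc μ ^ 4 * 1 = μ ^ 4 := by ring
      _ ≤ (a ^ 2 + μ ^ 2) * (b ^ 2 + μ ^ 2) := key2
      _ = μ ^ 4 * ((μ ^ 4)⁻¹ * ((a ^ 2 + μ ^ 2) * (b ^ 2 + μ ^ 2))) := by field_simp
    calc c ^ 2 + 1 ≤ (μ ^ 2)⁻¹ * ((a ^ 2 + μ ^ 2) * (b ^ 2 + μ ^ 2))
        + (μ ^ 4)⁻¹ * ((a ^ 2 + μ ^ 2) * (b ^ 2 + μ ^ 2)) := add_le_add e1 e2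
    _ = _ := by ring
  -- rewrite both sides as rpow of products
  have lhs_eq : (a ^ 2 + μ ^ 2) ^ (-(1 / 4 : ℝ)) * (b ^ 2 + μ ^ 2) ^ (-(1 / 4 : ℝ))
      = ((a ^ 2 + μ ^ 2) * (b ^ 2 + μ ^ 2)) ^ (-(1 / 4 : ℝ)) := by
    rw [Real.mul_rpow hX.le hY.le]
  have rhs_eq : ((μ ^ 2)⁻¹ + (μ ^ 4)⁻¹) ^ ((1 : ℝ) / 4) * (c ^ 2 + 1) ^ (-(1 / 4 : ℝ))
      = ((((μ ^ 2)⁻¹ + (μ ^ 4)⁻¹)⁻¹) * (c ^ 2 + 1)) ^ (-(1 / 4 : ℝ)) := by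
    rw [Real.mul_rpow (by positivity) hW.le, Real.inv_rpow hcinv.le,
      Real.rpow_neg hcinv.le, inv_inv]
  rw [lhs_eq, rhs_eq]
  apply Real.rpow_le_rpow_of_nonpos
  · positivity
  · rw [inv_mul_le_iff₀ hcinv]
    linarith [hmain]
  · norm_num
end

section
/- Let d ≥ 1 be an integer, μ > 0 and δ ∈ [0, 1). Then for all p ∈ ℝ^d and all k ∈ ℝ^d with k ≠ 0 one has (|p|² + μ²)^{−1/4} · (|p + k|² + μ²)^{−1/4} ≤ (μ^{−2} + μ^{−4})^{1/4} · |k|^{−(1−δ)/2}. -/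
theorem stmt_14
    (d : ℕ) (hd : 1 ≤ d) (μ δ : ℝ) (hμ : 0 < μ) (hδ0 : 0 ≤ δ) (hδ1 : δ < 1)
    (p k : EuclideanSpace ℝ (Fin d)) (hk : k ≠ 0) :
    (‖p‖ ^ 2 + μ ^ 2) ^ (-(1 / 4 : ℝ)) * (‖p + k‖ ^ 2 + μ ^ 2) ^ (-(1 / 4 : ℝ)) ≤
      ((μ ^ 2)⁻¹ + (μ ^ 4)⁻¹) ^ ((1 : ℝ) / 4) * ‖k‖ ^ (-((1 - δ) / 2)) := by
  set x := ‖p‖ with hxdef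
  set y := ‖p + k‖ with hydef
  have hx : 0 ≤ x := norm_nonneg _
  have hy : 0 ≤ y := norm_nonneg _
  have hr : 0 < ‖k‖ := norm_pos_iff.mpr hk
  have hA : (0:ℝ) < x ^ 2 + μ ^ 2 := by positivity
  have hB : (0:ℝ) < y ^ 2 + μ ^ 2 := by positivity
  have hAB : (0:ℝ) < (x ^ 2 + μ ^ 2) * (y ^ 2 + μ ^ 2) := mul_pos hA hB
  have hc4 : (0:ℝ) < (μ ^ 2)⁻¹ + (μ ^ 4)⁻¹ := by positivity
  have hμ4 : (0:ℝ) < μ ^ 4 := by positivity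
  have hR : (0:ℝ) < ‖k‖ ^ ((2:ℝ) - 2 * δ) := Real.rpow_pos_of_pos hr _
  have hxy : ‖k‖ ≤ x + y := by
    calc ‖k‖ = ‖(p + k) - p‖ := by rw [add_sub_cancel_left]
    _ ≤ ‖p + k‖ + ‖p‖ := norm_sub_le _ _
    _ = x + y := by ring
  have hc4eq : (μ ^ 2)⁻¹ + (μ ^ 4)⁻¹ = (μ ^ 2 + 1) / μ ^ 4 := by
    field_simp
  have key : ‖k‖ ^ ((2:ℝ) - 2 * δ) ≤
      ((μ ^ 2)⁻¹ + (μ ^ 4)⁻¹) * ((x ^ 2 + μ ^ 2) * (y ^ 2 + μ ^ 2)) := by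
    have h5' : μ ^ 4 * (x + y) ^ 2 ≤ (μ ^ 2 + 1) * ((x ^ 2 + μ ^ 2) * (y ^ 2 + μ ^ 2)) := by
      nlinarith [sq_nonneg (μ ^ 3 - μ * x * y), sq_nonneg (μ * x), sq_nonneg (μ * y),
        sq_nonneg (x * y), sq_nonneg μ, sq_nonneg (μ ^ 2)]
    have h5 : (x + y) ^ 2 ≤
        ((μ ^ 2)⁻¹ + (μ ^ 4)⁻¹) * ((x ^ 2 + μ ^ 2) * (y ^ 2 + μ ^ 2)) := by
      rw [hc4eq, div_mul_eq_mul_div, le_div_iff₀ hμ4]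
      linarith
    rcases le_or_gt ‖k‖ 1 with h1 | h1
    · have h2 : ‖k‖ ^ ((2:ℝ) - 2 * δ) ≤ 1 := Real.rpow_le_one hr.le h1 (by linarith)
      have h3 : (1:ℝ) ≤ ((μ ^ 2)⁻¹ + (μ ^ 4)⁻¹) * ((x ^ 2 + μ ^ 2) * (y ^ 2 + μ ^ 2)) := by
        rw [hc4eq, div_mul_eq_mul_div, le_div_iff₀ hμ4]
        nlinarith [sq_nonneg (x * y), sq_nonneg (μ * x), sq_nonneg (μ * y), sq_nonneg (μ ^ 2)]
      linarith
    · have h2 : ‖k‖ ^ ((2:ℝ) - 2 * δ) ≤ ‖k‖ ^ (2:ℝ) :=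
        Real.rpow_le_rpow_of_exponent_le h1.le (by linarith)
      have h3 : ‖k‖ ^ (2:ℝ) = ‖k‖ ^ 2 := by
        rw [show (2:ℝ) = ((2:ℕ):ℝ) by norm_num, Real.rpow_natCast]
      have h4 : ‖k‖ ^ 2 ≤ (x + y) ^ 2 := by nlinarith
      calc ‖k‖ ^ ((2:ℝ) - 2 * δ) ≤ ‖k‖ ^ (2:ℝ) := h2
      _ = ‖k‖ ^ 2 := h3
      _ ≤ (x + y) ^ 2 := h4
      _ ≤ _ := h5
  have hrw : ‖k‖ ^ (-((1 - δ) / 2)) = (‖k‖ ^ ((2:ℝ) - 2 * δ)) ^ (-(1 / 4 : ℝ)) := by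
    rw [← Real.rpow_mul hr.le]
    congr 1
    ring
  have hmain : (((x ^ 2 + μ ^ 2) * (y ^ 2 + μ ^ 2)))⁻¹ ≤
      ((μ ^ 2)⁻¹ + (μ ^ 4)⁻¹) * (‖k‖ ^ ((2:ℝ) - 2 * δ))⁻¹ := by
    rw [← one_div, ← div_eq_mul_inv, div_le_div_iff₀ hAB hR]
    linarith
  calc (x ^ 2 + μ ^ 2) ^ (-(1 / 4 : ℝ)) * (y ^ 2 + μ ^ 2) ^ (-(1 / 4 : ℝ))
      = ((x ^ 2 + μ ^ 2) * (y ^ 2 + μ ^ 2)) ^ (-(1 / 4 : ℝ)) :=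
        (Real.mul_rpow hA.le hB.le).symm
    _ = (((x ^ 2 + μ ^ 2) * (y ^ 2 + μ ^ 2))⁻¹) ^ ((1 : ℝ) / 4) := by
        rw [Real.rpow_neg hAB.le, ← Real.inv_rpow hAB.le]
    _ ≤ (((μ ^ 2)⁻¹ + (μ ^ 4)⁻¹) * (‖k‖ ^ ((2:ℝ) - 2 * δ))⁻¹) ^ ((1 : ℝ) / 4) :=
        Real.rpow_le_rpow (inv_nonneg.mpr hAB.le) hmain (by norm_num)
    _ = ((μ ^ 2)⁻¹ + (μ ^ 4)⁻¹) ^ ((1 : ℝ) / 4) * ((‖k‖ ^ ((2:ℝ) - 2 * δ))⁻¹) ^ ((1 : ℝ) / 4) :=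
        Real.mul_rpow hc4.le (inv_nonneg.mpr hR.le)
    _ = ((μ ^ 2)⁻¹ + (μ ^ 4)⁻¹) ^ ((1 : ℝ) / 4) * ‖k‖ ^ (-((1 - δ) / 2)) := by
        rw [hrw, Real.inv_rpow hR.le, ← Real.rpow_neg hR.le]
end

section
/- Let d ≥ 1 be an integer, μ ≥ 0 and α ≥ 0 with 0 ≤ d − 2α − 1 < 1; set 𝒟 := d − 2α − 1, Θ(p) := √(|p|² + μ²) and ω(q) := √(|q|² + 1). Then for every sufficiently small ε > 0 there exists a constant C > 0 such that for all Λ ≥ 0 and all p ∈ ℝ^d: ∫_{ℝ^d} 1_{|q|>Λ} · |q|^{−2α} · |Θ(q) − Θ(p−q)| / ((Θ(p−q) + ω(q))(Θ(q) + ω(q))) dq ≤ C · Λ^{−ε_Λ/2} · (|p|^{𝒟+ε} + 1), where ε_Λ := ε if Λ > 1 and ε_Λ := 0 otherwise. -/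
open MeasureTheory Measure Set Metric
open scoped ENNReal

lemma aux_radial {E : Type*} [NormedAddCommGroup E] [NormedSpace ℝ E] [MeasurableSpace E]
    [BorelSpace E] [FiniteDimensional ℝ E] [Nontrivial E]
    (μ : Measure E) [μ.IsAddHaarMeasure] (F : ℝ → ℝ≥0∞) (hF : Measurable F) :
    ∫⁻ x, F ‖x‖ ∂μ = μ.toSphere univ *
      ∫⁻ r in Ioi (0:ℝ), ENNReal.ofReal (r ^ (Module.finrank ℝ E - 1)) * F r := by
  have h1 : ∫⁻ x, F ‖x‖ ∂μ = ∫⁻ x : ({(0:E)}ᶜ : Set E), F ‖(x:E)‖ ∂(μ.comap (↑)) := by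
    rw [lintegral_subtype_comap (measurableSet_singleton (0:E)).compl (fun x => F ‖x‖),
      MeasureTheory.restrict_compl_singleton]
  have h2 : ∫⁻ x : ({(0:E)}ᶜ : Set E), F ‖(x:E)‖ ∂(μ.comap (↑)) =
      ∫⁻ y : sphere (0:E) 1 × Ioi (0:ℝ), F y.2
        ∂(μ.toSphere.prod (Measure.volumeIoiPow (Module.finrank ℝ E - 1))) := by
    rw [← μ.measurePreserving_homeomorphUnitSphereProd.lintegral_comp_emb
      (Homeomorph.measurableEmbedding _) (fun y => F y.2)]
    simp
  have h3 : ∫⁻ y : sphere (0:E) 1 × Ioi (0:ℝ), F y.2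
        ∂(μ.toSphere.prod (Measure.volumeIoiPow (Module.finrank ℝ E - 1))) =
      μ.toSphere univ * ∫⁻ r : Ioi (0:ℝ), F r
        ∂(Measure.volumeIoiPow (Module.finrank ℝ E - 1)) := by
    have hm : Measurable (fun r : Ioi (0:ℝ) => F r) := hF.comp measurable_subtype_coe
    rw [← lintegral_map hm measurable_snd, Measure.map_snd_prod, lintegral_smul_measure, smul_eq_mul]
  have h4 : ∫⁻ r : Ioi (0:ℝ), F r ∂(Measure.volumeIoiPow (Module.finrank ℝ E - 1)) =
      ∫⁻ r in Ioi (0:ℝ), ENNReal.ofReal (r ^ (Module.finrank ℝ E - 1)) * F r := by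
    rw [Measure.volumeIoiPow, lintegral_withDensity_eq_lintegral_mul _
      (g := fun r : Ioi (0:ℝ) => F r)
      (by exact (measurable_subtype_coe.pow_const _).ennreal_ofReal)
      (hF.comp measurable_subtype_coe)]
    rw [← lintegral_subtype_comap measurableSet_Ioi
      (fun r : ℝ => ENNReal.ofReal (r ^ (Module.finrank ℝ E - 1)) * F r)]
    rfl
  rw [h1, h2, h3, h4]

lemma aux_key {A : Set ℝ} (c : ℝ) (f : ℝ → ℝ≥0∞)
    (hb : ∀ r ∈ A, f r ≤ ENNReal.ofReal (r ^ c))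
    (hint : IntegrableOn (fun r : ℝ => r ^ c) A) :
    (∫⁻ r in A, f r) < ⊤ := by
  calc ∫⁻ r in A, f r ≤ ∫⁻ r in A, ENNReal.ofReal (r ^ c) :=
        setLIntegral_mono (by fun_prop) hb
    _ ≤ ∫⁻ r in A, (‖r ^ c‖₊ : ℝ≥0∞) := lintegral_mono fun r => Real.ofReal_le_enorm _
    _ < ⊤ := hint.2

lemma aux_finite (d : ℕ) (hd : 1 ≤ d) (s t : ℝ) (hs : -(d:ℝ) < s)
    (hst : (d:ℝ) - 1 + s + 2*t < -1) (ht : t ≤ 0) :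
    ∫⁻ q : EuclideanSpace ℝ (Fin d), ENNReal.ofReal (‖q‖ ^ s * (‖q‖^2+1) ^ t) < ⊤ := by
  haveI : Nontrivial (EuclideanSpace ℝ (Fin d)) := by
    apply Module.nontrivial_of_finrank_pos (R := ℝ)
    rw [finrank_euclideanSpace_fin]; exact hd
  have hF : Measurable (fun r : ℝ => ENNReal.ofReal (r ^ s * (r^2+1) ^ t)) := by fun_prop
  rw [aux_radial volume _ hF, finrank_euclideanSpace_fin]
  refine ENNReal.mul_lt_top (measure_lt_top _ _) ?_
  rw [← Set.Ioc_union_Ioi_eq_Ioi (zero_le_one (α := ℝ)),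
    lintegral_union measurableSet_Ioi (Set.Ioc_disjoint_Ioi le_rfl)]
  have hcast : ((d - 1 : ℕ) : ℝ) = (d:ℝ) - 1 := by
    rw [Nat.cast_sub hd, Nat.cast_one]
  refine ENNReal.add_lt_top.2 ⟨?_, ?_⟩
  · refine aux_key ((d:ℝ) - 1 + s) _ (fun r hr => ?_) ?_
    · obtain ⟨hr0, hr1⟩ := hr
      rw [← ENNReal.ofReal_mul (by positivity)]
      apply ENNReal.ofReal_le_ofReal
      have h1 : (r:ℝ) ^ (d-1 : ℕ) = r ^ ((d:ℝ) - 1) := by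
        rw [← Real.rpow_natCast r (d-1), hcast]
      rw [h1, ← mul_assoc, ← Real.rpow_add hr0]
      calc r ^ ((d:ℝ) - 1 + s) * (r^2+1) ^ t ≤ r ^ ((d:ℝ) - 1 + s) * 1 := by
            apply mul_le_mul_of_nonneg_left _ (Real.rpow_nonneg hr0.le _)
            exact Real.rpow_le_one_of_one_le_of_nonpos (by nlinarith) ht
        _ = _ := mul_one _
    · have := (intervalIntegral.integrableOn_Ioo_rpow_iff one_pos).2 (by linarith : (-1:ℝ) < (d:ℝ) - 1 + s)
      rwa [IntegrableOn, Measure.restrict_congr_set MeasureTheory.Ioo_ae_eq_Ioc] at this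
  · refine aux_key ((d:ℝ) - 1 + s + 2*t) _ (fun r hr => ?_)
      (integrableOn_Ioi_rpow_of_lt hst one_pos)
    have hr1 : (1:ℝ) < r := hr
    have hr0 : (0:ℝ) < r := lt_trans one_pos hr1
    rw [← ENNReal.ofReal_mul (by positivity)]
    apply ENNReal.ofReal_le_ofReal
    have h1 : (r:ℝ) ^ (d-1 : ℕ) = r ^ ((d:ℝ) - 1) := by
      rw [← Real.rpow_natCast r (d-1), hcast]
    rw [h1, ← mul_assoc, ← Real.rpow_add hr0, Real.rpow_add hr0 _ (2*t)]
    apply mul_le_mul_of_nonneg_left _ (Real.rpow_nonneg hr0.le _)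
    calc (r^2+1) ^ t ≤ (r^2) ^ t := Real.rpow_le_rpow_of_nonpos (by positivity) (by linarith) ht
      _ = r ^ (2*t) := by
          rw [← Real.rpow_natCast r 2, ← Real.rpow_mul hr0.le]
          norm_num

lemma aux_sqrt_lip (m a b : ℝ) (ha : 0 ≤ a) (hb : 0 ≤ b) :
    Real.sqrt (a^2 + m^2) ≤ Real.sqrt (b^2 + m^2) + |a - b| := by
  set s := Real.sqrt (b^2 + m^2) with hs
  have h1 : s^2 = b^2 + m^2 := Real.sq_sqrt (by positivity)
  have h2 : 0 ≤ s := Real.sqrt_nonneg _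
  have hb' : b ≤ s := by nlinarith [sq_nonneg (s - b), sq_nonneg m]
  have key : a^2 + m^2 ≤ (s + |a - b|)^2 := by
    nlinarith [mul_le_mul_of_nonneg_left (le_abs_self (a-b)) hb,
      mul_le_mul_of_nonneg_right hb' (abs_nonneg (a-b)), sq_abs (a-b), abs_nonneg (a-b)]
  calc Real.sqrt (a^2 + m^2) ≤ Real.sqrt ((s + |a - b|)^2) := Real.sqrt_le_sqrt key
    _ = s + |a - b| := Real.sqrt_sq (by positivity)

lemma aux_core (ω a b pn θ : ℝ) (hω : 1 ≤ ω) (ha : 0 ≤ a) (hb : 0 ≤ b)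
    (hpn : 0 ≤ pn) (habs : |a - b| ≤ pn) (hθ0 : 0 < θ) (hθ1 : θ ≤ 1) :
    |a - b| / ((b + ω) * (a + ω)) ≤ pn ^ θ * (ω ^ (1 + θ))⁻¹ := by
  have hω0 : (0:ℝ) < ω := lt_of_lt_of_le one_pos hω
  have hD : (0:ℝ) < (b + ω) * (a + ω) := by positivity
  have hab : |a - b| ≤ a + b := by
    have := abs_sub a b
    rwa [abs_of_nonneg ha, abs_of_nonneg hb] at this
  have h1 : |a - b| * ω ≤ (b + ω) * (a + ω) := by
    nlinarith [mul_nonneg hω0.le (show (0:ℝ) ≤ a + b - |a-b| by linarith),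
      mul_nonneg ha hb, sq_nonneg ω]
  have hω1θ : ω ^ (1 + θ) = ω * ω ^ θ := by
    rw [Real.rpow_add hω0, Real.rpow_one]
  have hωθ0 : (0:ℝ) < ω ^ θ := Real.rpow_pos_of_pos hω0 _
  rcases le_or_gt ω pn with hcase | hcase
  · have h2 : |a - b| / ((b + ω) * (a + ω)) ≤ 1 / ω := by
      rw [div_le_div_iff₀ hD hω0]
      linarith
    refine h2.trans ?_
    have h3 : ω ^ θ ≤ pn ^ θ := Real.rpow_le_rpow hω0.le hcase hθ0.le
    calc (1:ℝ) / ω = ω ^ θ * (ω ^ (1 + θ))⁻¹ := by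
          rw [hω1θ]; field_simp
      _ ≤ pn ^ θ * (ω ^ (1 + θ))⁻¹ := by
          apply mul_le_mul_of_nonneg_right h3 (by positivity)
  · have h2 : |a - b| / ((b + ω) * (a + ω)) ≤ pn / (ω * ω) :=
      div_le_div₀ hpn habs (by positivity) (by nlinarith)
    refine h2.trans ?_
    rcases eq_or_lt_of_le hpn with hp0 | hp0
    · rw [← hp0]
      simp only [zero_div]
      positivity
    · have hx0 : (0:ℝ) < pn / ω := by positivity
      have hx1 : pn / ω ≤ 1 := by rw [div_le_one hω0]; linarith
      have h3 : pn / ω ≤ (pn / ω) ^ θ := by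
        calc pn / ω = (pn / ω) ^ (1:ℝ) := (Real.rpow_one _).symm
          _ ≤ (pn / ω) ^ θ := Real.rpow_le_rpow_of_exponent_ge hx0 hx1 hθ1
      calc pn / (ω * ω) = (pn / ω) * (1 / ω) := by ring
        _ ≤ (pn / ω) ^ θ * (1 / ω) := mul_le_mul_of_nonneg_right h3 (by positivity)
        _ = pn ^ θ * (ω ^ (1 + θ))⁻¹ := by
            rw [Real.div_rpow hpn hω0.le, hω1θ, mul_inv, div_eq_mul_inv]
            ring

lemma aux_step {E : Type*} [MeasurableSpace E] {μ : MeasureTheory.Measure E}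
    (f g : E → ℝ) (c : ℝ) (hc : 0 ≤ c) (h : ∀ q, f q ≤ c * g q) :
    ∫⁻ q, ENNReal.ofReal (f q) ∂μ ≤ ENNReal.ofReal c * ∫⁻ q, ENNReal.ofReal (g q) ∂μ := by
  calc ∫⁻ q, ENNReal.ofReal (f q) ∂μ ≤ ∫⁻ q, ENNReal.ofReal (c * g q) ∂μ :=
        lintegral_mono fun q => ENNReal.ofReal_le_ofReal (h q)
    _ = ∫⁻ q, ENNReal.ofReal c * ENNReal.ofReal (g q) ∂μ := by
        simp_rw [ENNReal.ofReal_mul hc]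
    _ = _ := lintegral_const_mul' _ _ ENNReal.ofReal_ne_top


theorem stmt_15
    (d : ℕ) (hd : 1 ≤ d) (μ α : ℝ) (hμ : 0 ≤ μ) (hα : 0 ≤ α)
    (h𝒟0 : 0 ≤ (d : ℝ) - 2 * α - 1) (h𝒟1 : (d : ℝ) - 2 * α - 1 < 1) :
    ∃ ε₀ > (0:ℝ), ∀ ε : ℝ, 0 < ε → ε < ε₀ → ∃ C > (0:ℝ),
      ∀ Λ : ℝ, 0 ≤ Λ → ∀ p : EuclideanSpace ℝ (Fin d),
        (∫⁻ q : EuclideanSpace ℝ (Fin d),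
            ENNReal.ofReal ((if Λ < ‖q‖ then (1:ℝ) else 0) * ‖q‖ ^ (-(2 * α)) *
              |Real.sqrt (‖q‖ ^ 2 + μ ^ 2) - Real.sqrt (‖p - q‖ ^ 2 + μ ^ 2)| /
              ((Real.sqrt (‖p - q‖ ^ 2 + μ ^ 2) + Real.sqrt (‖q‖ ^ 2 + 1)) *
                (Real.sqrt (‖q‖ ^ 2 + μ ^ 2) + Real.sqrt (‖q‖ ^ 2 + 1)))))
          ≤ ENNReal.ofReal (C * Λ ^ (-((if 1 < Λ then ε else 0) / 2)) *
              (‖p‖ ^ (((d : ℝ) - 2 * α - 1) + ε) + 1)) := by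
  refine ⟨1 - ((d:ℝ) - 2*α - 1), by linarith, fun ε hε hεlt => ?_⟩
  set θ : ℝ := (d:ℝ) - 2*α - 1 + ε with hθdef
  have hθ0 : 0 < θ := by rw [hθdef]; linarith
  have hθ1 : θ ≤ 1 := by rw [hθdef]; linarith
  set t : ℝ := -((1 + θ)/2) with htdef
  have ht0 : t ≤ 0 := by rw [htdef]; linarith
  have h2α : 2*α ≤ (d:ℝ) - 1 := by linarith
  set J0 := ∫⁻ q : EuclideanSpace ℝ (Fin d),
      ENNReal.ofReal (‖q‖ ^ (-(2*α)) * (‖q‖^2+1) ^ t) with hJ0def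
  set J1 := ∫⁻ q : EuclideanSpace ℝ (Fin d),
      ENNReal.ofReal (‖q‖ ^ (-(2*α) + ε/2) * (‖q‖^2+1) ^ t) with hJ1def
  have hI0 : J0 < ⊤ := by
    rw [hJ0def]
    exact aux_finite d hd (-(2*α)) t (by linarith)
      (by rw [htdef, hθdef]; linarith) ht0
  have hI1 : J1 < ⊤ := by
    rw [hJ1def]
    exact aux_finite d hd (-(2*α) + ε/2) t (by linarith)
      (by rw [htdef, hθdef]; linarith) ht0
  have hC0 : (0:ℝ) < J0.toReal + J1.toReal + 1 := by positivity
  refine ⟨J0.toReal + J1.toReal + 1, hC0, fun Λ hΛ0 p => ?_⟩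
  -- the main pointwise geometric estimate
  have hmain : ∀ q : EuclideanSpace ℝ (Fin d),
      |Real.sqrt (‖q‖ ^ 2 + μ ^ 2) - Real.sqrt (‖p - q‖ ^ 2 + μ ^ 2)| /
        ((Real.sqrt (‖p - q‖ ^ 2 + μ ^ 2) + Real.sqrt (‖q‖ ^ 2 + 1)) *
          (Real.sqrt (‖q‖ ^ 2 + μ ^ 2) + Real.sqrt (‖q‖ ^ 2 + 1)))
      ≤ ‖p‖ ^ θ * (‖q‖ ^ 2 + 1) ^ t := by
    intro q
    have hX : (0:ℝ) < ‖q‖^2 + 1 := by positivity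
    have hω : 1 ≤ Real.sqrt (‖q‖ ^ 2 + 1) := by
      have h := Real.sqrt_le_sqrt (show (1:ℝ) ≤ ‖q‖^2 + 1 by nlinarith [sq_nonneg ‖q‖])
      rwa [Real.sqrt_one] at h
    have habs : |Real.sqrt (‖q‖ ^ 2 + μ ^ 2) - Real.sqrt (‖p - q‖ ^ 2 + μ ^ 2)| ≤ ‖p‖ := by
      have l1 := aux_sqrt_lip μ ‖q‖ ‖p - q‖ (norm_nonneg _) (norm_nonneg _)
      have l2 := aux_sqrt_lip μ ‖p - q‖ ‖q‖ (norm_nonneg _) (norm_nonneg _)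
      have l3 : |‖q‖ - ‖p - q‖| ≤ ‖p‖ := by
        have h := abs_norm_sub_norm_le q (q - p)
        rw [sub_sub_cancel] at h
        rwa [norm_sub_rev p q]
      have l4 : |‖p - q‖ - ‖q‖| ≤ ‖p‖ := by rwa [abs_sub_comm]
      rw [abs_sub_le_iff]
      constructor
      · have := le_abs_self (‖q‖ - ‖p - q‖)
        linarith [l1, l3]
      · have := le_abs_self (‖p - q‖ - ‖q‖)
        linarith [l2, l4]
    have core := aux_core (Real.sqrt (‖q‖ ^ 2 + 1)) (Real.sqrt (‖q‖ ^ 2 + μ ^ 2))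
      (Real.sqrt (‖p - q‖ ^ 2 + μ ^ 2)) ‖p‖ θ hω (Real.sqrt_nonneg _) (Real.sqrt_nonneg _)
      (norm_nonneg p) habs hθ0 hθ1
    have hωt : ((Real.sqrt (‖q‖ ^ 2 + 1)) ^ (1 + θ))⁻¹ = (‖q‖ ^ 2 + 1) ^ t := by
      have h1 : (Real.sqrt (‖q‖ ^ 2 + 1)) ^ (1 + θ) = (‖q‖ ^ 2 + 1) ^ ((1 + θ)/2) := by
        rw [Real.sqrt_eq_rpow, ← Real.rpow_mul hX.le]
        congr 1
        ring
      rw [h1, htdef, Real.rpow_neg hX.le]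
    rw [← hωt]
    exact core
  by_cases h1Λ : 1 < Λ
  · simp only [if_pos h1Λ]
    have hΛpos : (0:ℝ) < Λ := lt_trans one_pos h1Λ
    have claim : ∀ q : EuclideanSpace ℝ (Fin d),
        (if Λ < ‖q‖ then (1:ℝ) else 0) * ‖q‖ ^ (-(2 * α)) *
          |Real.sqrt (‖q‖ ^ 2 + μ ^ 2) - Real.sqrt (‖p - q‖ ^ 2 + μ ^ 2)| /
          ((Real.sqrt (‖p - q‖ ^ 2 + μ ^ 2) + Real.sqrt (‖q‖ ^ 2 + 1)) *
            (Real.sqrt (‖q‖ ^ 2 + μ ^ 2) + Real.sqrt (‖q‖ ^ 2 + 1)))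
        ≤ (Λ ^ (-(ε/2)) * ‖p‖ ^ θ) * (‖q‖ ^ (-(2*α) + ε/2) * (‖q‖^2+1) ^ t) := by
      intro q
      by_cases hχ : Λ < ‖q‖
      · rw [if_pos hχ, one_mul, mul_div_assoc]
        have hq0 : (0:ℝ) < ‖q‖ := lt_trans hΛpos hχ
        have hsplit : ‖q‖ ^ (-(2*α)) = ‖q‖ ^ (-(2*α) + ε/2) * ‖q‖ ^ (-(ε/2)) := by
          rw [← Real.rpow_add hq0]
          congr 1
          ring
        have hKq : ‖q‖ ^ (-(ε/2)) ≤ Λ ^ (-(ε/2)) :=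
          Real.rpow_le_rpow_of_nonpos hΛpos hχ.le (by linarith)
        calc ‖q‖ ^ (-(2*α)) *
              (|Real.sqrt (‖q‖ ^ 2 + μ ^ 2) - Real.sqrt (‖p - q‖ ^ 2 + μ ^ 2)| /
              ((Real.sqrt (‖p - q‖ ^ 2 + μ ^ 2) + Real.sqrt (‖q‖ ^ 2 + 1)) *
                (Real.sqrt (‖q‖ ^ 2 + μ ^ 2) + Real.sqrt (‖q‖ ^ 2 + 1))))
            ≤ ‖q‖ ^ (-(2*α)) * (‖p‖ ^ θ * (‖q‖ ^ 2 + 1) ^ t) :=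
              mul_le_mul_of_nonneg_left (hmain q) (Real.rpow_nonneg (norm_nonneg q) _)
          _ = ‖q‖ ^ (-(ε/2)) * (‖p‖ ^ θ * (‖q‖ ^ (-(2*α) + ε/2) * (‖q‖^2+1) ^ t)) := by
              rw [hsplit]; ring
          _ ≤ Λ ^ (-(ε/2)) * (‖p‖ ^ θ * (‖q‖ ^ (-(2*α) + ε/2) * (‖q‖^2+1) ^ t)) := by
              apply mul_le_mul_of_nonneg_right hKq
              positivity
          _ = (Λ ^ (-(ε/2)) * ‖p‖ ^ θ) * (‖q‖ ^ (-(2*α) + ε/2) * (‖q‖^2+1) ^ t) := by ring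
      · rw [if_neg hχ, zero_mul, zero_mul, zero_div]
        exact mul_nonneg (mul_nonneg (Real.rpow_nonneg hΛ0 _)
          (Real.rpow_nonneg (norm_nonneg p) _)) (by positivity)
    refine le_trans (aux_step _ _ _
      (mul_nonneg (Real.rpow_nonneg hΛ0 _) (Real.rpow_nonneg (norm_nonneg p) _)) claim) ?_
    have hJle : J1 ≤ ENNReal.ofReal (J0.toReal + J1.toReal + 1) := by
      conv_lhs => rw [← ENNReal.ofReal_toReal hI1.ne]
      exact ENNReal.ofReal_le_ofReal (by nlinarith [ENNReal.toReal_nonneg (a := J0)])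
    calc ENNReal.ofReal (Λ ^ (-(ε/2)) * ‖p‖ ^ θ) * J1
        ≤ ENNReal.ofReal (Λ ^ (-(ε/2)) * ‖p‖ ^ θ) *
            ENNReal.ofReal (J0.toReal + J1.toReal + 1) := mul_le_mul_right hJle _
      _ = ENNReal.ofReal ((Λ ^ (-(ε/2)) * ‖p‖ ^ θ) * (J0.toReal + J1.toReal + 1)) :=
          (ENNReal.ofReal_mul (mul_nonneg (Real.rpow_nonneg hΛ0 _)
            (Real.rpow_nonneg (norm_nonneg p) _))).symm
      _ ≤ ENNReal.ofReal ((J0.toReal + J1.toReal + 1) * Λ ^ (-(ε/2)) * (‖p‖ ^ θ + 1)) := by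
          apply ENNReal.ofReal_le_ofReal
          nlinarith [mul_nonneg (mul_nonneg hC0.le (Real.rpow_nonneg hΛ0 (-(ε/2))))
            (Real.rpow_nonneg (norm_nonneg p) θ),
            mul_nonneg hC0.le (Real.rpow_nonneg hΛ0 (-(ε/2)))]
  · simp only [if_neg h1Λ]
    rw [show -((0:ℝ)/2) = 0 by norm_num, Real.rpow_zero, mul_one]
    have claim : ∀ q : EuclideanSpace ℝ (Fin d),
        (if Λ < ‖q‖ then (1:ℝ) else 0) * ‖q‖ ^ (-(2 * α)) *
          |Real.sqrt (‖q‖ ^ 2 + μ ^ 2) - Real.sqrt (‖p - q‖ ^ 2 + μ ^ 2)| /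
          ((Real.sqrt (‖p - q‖ ^ 2 + μ ^ 2) + Real.sqrt (‖q‖ ^ 2 + 1)) *
            (Real.sqrt (‖q‖ ^ 2 + μ ^ 2) + Real.sqrt (‖q‖ ^ 2 + 1)))
        ≤ (‖p‖ ^ θ) * (‖q‖ ^ (-(2*α)) * (‖q‖^2+1) ^ t) := by
      intro q
      by_cases hχ : Λ < ‖q‖
      · rw [if_pos hχ, one_mul, mul_div_assoc]
        calc ‖q‖ ^ (-(2*α)) *
              (|Real.sqrt (‖q‖ ^ 2 + μ ^ 2) - Real.sqrt (‖p - q‖ ^ 2 + μ ^ 2)| /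
              ((Real.sqrt (‖p - q‖ ^ 2 + μ ^ 2) + Real.sqrt (‖q‖ ^ 2 + 1)) *
                (Real.sqrt (‖q‖ ^ 2 + μ ^ 2) + Real.sqrt (‖q‖ ^ 2 + 1))))
            ≤ ‖q‖ ^ (-(2*α)) * (‖p‖ ^ θ * (‖q‖ ^ 2 + 1) ^ t) :=
              mul_le_mul_of_nonneg_left (hmain q) (Real.rpow_nonneg (norm_nonneg q) _)
          _ = (‖p‖ ^ θ) * (‖q‖ ^ (-(2*α)) * (‖q‖^2+1) ^ t) := by ring
      · rw [if_neg hχ, zero_mul, zero_mul, zero_div]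
        positivity
    refine le_trans (aux_step _ _ _ (Real.rpow_nonneg (norm_nonneg p) _) claim) ?_
    have hJle : J0 ≤ ENNReal.ofReal (J0.toReal + J1.toReal + 1) := by
      conv_lhs => rw [← ENNReal.ofReal_toReal hI0.ne]
      exact ENNReal.ofReal_le_ofReal (by nlinarith [ENNReal.toReal_nonneg (a := J1)])
    calc ENNReal.ofReal (‖p‖ ^ θ) * J0
        ≤ ENNReal.ofReal (‖p‖ ^ θ) *
            ENNReal.ofReal (J0.toReal + J1.toReal + 1) := mul_le_mul_right hJle _
      _ = ENNReal.ofReal ((‖p‖ ^ θ) * (J0.toReal + J1.toReal + 1)) :=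
          (ENNReal.ofReal_mul (Real.rpow_nonneg (norm_nonneg p) _)).symm
      _ ≤ ENNReal.ofReal ((J0.toReal + J1.toReal + 1) * (‖p‖ ^ θ + 1)) := by
          apply ENNReal.ofReal_le_ofReal
          nlinarith [Real.rpow_nonneg (norm_nonneg p) θ, hC0.le]
end

section
/- Let d ≥ 1 be an integer, μ ≥ 0 and α ≥ 0 with 𝒟 := d − 2α − 1 ∈ (0, 1); set Θ(p) := √(|p|² + μ²) and ω(q) := √(|q|² + 1). Then there exists a constant C > 0 such that for all p ∈ ℝ^d: ∫_{ℝ^d} |q|^{−2α} · |Θ(q) − Θ(p−q)| / ((Θ(p−q) + ω(q))(Θ(q) + ω(q))) dq ≤ C · (|p|^𝒟 + 1). -/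
open MeasureTheory

section Helpers

open Measure Set Metric ENNReal

variable {E : Type*} [NormedAddCommGroup E] [NormedSpace ℝ E] [MeasurableSpace E] [BorelSpace E]
  [Nontrivial E] [FiniteDimensional ℝ E]

lemma my_lintegral_fun_norm_addHaar (μ : Measure E) [μ.IsAddHaarMeasure]
    (f : ℝ → ℝ≥0∞) (hf : Measurable f) :
    ∫⁻ x, f ‖x‖ ∂μ = (Module.finrank ℝ E) * μ (ball 0 1) *
      ∫⁻ y in Ioi (0:ℝ), ENNReal.ofReal (y ^ (Module.finrank ℝ E - 1)) * f y := by
  have h0 : MeasurableSet ({0}ᶜ : Set E) := (measurableSet_singleton 0).compl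
  have hm : Measurable (fun z : sphere (0:E) 1 × Ioi (0:ℝ) => f z.2) :=
    hf.comp (measurable_subtype_coe.comp measurable_snd)
  calc ∫⁻ x, f ‖x‖ ∂μ
      = ∫⁻ x in ({0}ᶜ : Set E), f ‖x‖ ∂μ := by rw [restrict_compl_singleton]
    _ = ∫⁻ x : ({0}ᶜ : Set E), f ‖(x : E)‖ ∂(μ.comap (↑)) :=
        (lintegral_subtype_comap h0 fun x => f ‖x‖).symm
    _ = ∫⁻ z : sphere (0:E) 1 × Ioi (0:ℝ), f z.2
          ∂(μ.toSphere.prod (volumeIoiPow (Module.finrank ℝ E - 1))) :=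
        by rw [← μ.measurePreserving_homeomorphUnitSphereProd.lintegral_comp hm]; simp
    _ = μ.toSphere univ * ∫⁻ y : Ioi (0:ℝ), f y ∂(volumeIoiPow (Module.finrank ℝ E - 1)) := by
        rw [lintegral_prod (fun z : sphere (0:E) 1 × Ioi (0:ℝ) => f z.2) hm.aemeasurable]
        simp [lintegral_const, mul_comm]
    _ = (Module.finrank ℝ E) * μ (ball 0 1) *
          ∫⁻ y in Ioi (0:ℝ), ENNReal.ofReal (y ^ (Module.finrank ℝ E - 1)) * f y := by
        rw [μ.toSphere_apply_univ]
        congr 1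
        rw [volumeIoiPow,
          lintegral_withDensity_eq_lintegral_mul (comap Subtype.val volume)
            (f := fun r : Ioi (0:ℝ) => ENNReal.ofReal (r.1 ^ (Module.finrank ℝ E - 1)))
            (by fun_prop) (g := fun y : Ioi (0:ℝ) => f y) (hf.comp measurable_subtype_coe)]
        exact lintegral_subtype_comap measurableSet_Ioi
          (fun y => ENNReal.ofReal (y ^ (Module.finrank ℝ E - 1)) * f y)

lemma my_sqrt_lip {a b c : ℝ} (ha : 0 ≤ a) (hb : 0 ≤ b) (hc : 0 ≤ c) :
    |Real.sqrt (a ^ 2 + c) - Real.sqrt (b ^ 2 + c)| ≤ |a - b| := by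
  set t := Real.sqrt (a ^ 2 + c) with ht
  set s := Real.sqrt (b ^ 2 + c) with hs
  have ht2 : t ^ 2 = a ^ 2 + c := Real.sq_sqrt (by positivity)
  have hs2 : s ^ 2 = b ^ 2 + c := Real.sq_sqrt (by positivity)
  have hts : a * b + c ≤ t * s := by
    rw [ht, hs, ← Real.sqrt_mul (by positivity)]
    calc a * b + c = Real.sqrt ((a * b + c) ^ 2) := (Real.sqrt_sq (by positivity)).symm
      _ ≤ _ := Real.sqrt_le_sqrt (by nlinarith [sq_nonneg (a - b)])
  calc |t - s| = Real.sqrt ((t - s) ^ 2) := (Real.sqrt_sq_eq_abs _).symm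
    _ ≤ Real.sqrt ((a - b) ^ 2) := Real.sqrt_le_sqrt (by nlinarith)
    _ = |a - b| := Real.sqrt_sq_eq_abs _

lemma my_bound1 (α : ℝ) {x y m : ℝ} (hx : 0 < x) (hy : 0 ≤ y) (hm : 0 ≤ m) :
    x ^ (-(2 * α)) * |Real.sqrt (x ^ 2 + m ^ 2) - Real.sqrt (y ^ 2 + m ^ 2)| /
      ((Real.sqrt (y ^ 2 + m ^ 2) + Real.sqrt (x ^ 2 + 1)) *
        (Real.sqrt (x ^ 2 + m ^ 2) + Real.sqrt (x ^ 2 + 1)))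
      ≤ 2 * x ^ (-(2 * α) - 1) := by
  set A := Real.sqrt (x ^ 2 + m ^ 2) with hA
  set B := Real.sqrt (y ^ 2 + m ^ 2) with hB
  set W := Real.sqrt (x ^ 2 + 1) with hW
  have hA0 : 0 ≤ A := Real.sqrt_nonneg _
  have hB0 : 0 ≤ B := Real.sqrt_nonneg _
  have hWx : x ≤ W := by
    rw [hW]
    calc x = Real.sqrt (x ^ 2) := (Real.sqrt_sq hx.le).symm
      _ ≤ Real.sqrt (x ^ 2 + 1) := Real.sqrt_le_sqrt (by linarith)
  have hW0 : 0 < W := lt_of_lt_of_le hx hWx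
  have hD : 0 < (B + W) * (A + W) := by positivity
  have h1 : |A - B| ≤ A + B := abs_sub_le_iff.mpr ⟨by linarith, by linarith⟩
  have key : |A - B| / ((B + W) * (A + W)) ≤ 2 / x := by
    calc |A - B| / ((B + W) * (A + W)) ≤ (A + B) / ((B + W) * (A + W)) := by gcongr
      _ ≤ 2 / x := by
          rw [div_le_div_iff₀ hD hx]
          nlinarith [mul_nonneg (add_nonneg hA0 hB0) (sub_nonneg.2 hWx), mul_nonneg hA0 hB0,
            mul_nonneg hA0 hW0.le, mul_nonneg hB0 hW0.le, sq_nonneg W]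
  have hpow : x ^ (-(2 * α)) * (2 / x) = 2 * x ^ (-(2 * α) - 1) := by
    rw [Real.rpow_sub hx, Real.rpow_one]; ring
  calc x ^ (-(2 * α)) * |A - B| / ((B + W) * (A + W))
      = x ^ (-(2 * α)) * (|A - B| / ((B + W) * (A + W))) := by ring
    _ ≤ x ^ (-(2 * α)) * (2 / x) :=
        mul_le_mul_of_nonneg_left key (Real.rpow_nonneg hx.le _)
    _ = 2 * x ^ (-(2 * α) - 1) := hpow

lemma my_bound2 (α : ℝ) {x y m P : ℝ} (hx : 0 < x) (hy : 0 ≤ y) (hm : 0 ≤ m)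
    (hP : |Real.sqrt (x ^ 2 + m ^ 2) - Real.sqrt (y ^ 2 + m ^ 2)| ≤ P) :
    x ^ (-(2 * α)) * |Real.sqrt (x ^ 2 + m ^ 2) - Real.sqrt (y ^ 2 + m ^ 2)| /
      ((Real.sqrt (y ^ 2 + m ^ 2) + Real.sqrt (x ^ 2 + 1)) *
        (Real.sqrt (x ^ 2 + m ^ 2) + Real.sqrt (x ^ 2 + 1)))
      ≤ P * x ^ (-(2 * α) - 2) := by
  set A := Real.sqrt (x ^ 2 + m ^ 2) with hA
  set B := Real.sqrt (y ^ 2 + m ^ 2) with hB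
  set W := Real.sqrt (x ^ 2 + 1) with hW
  have hA0 : 0 ≤ A := Real.sqrt_nonneg _
  have hB0 : 0 ≤ B := Real.sqrt_nonneg _
  have hWx : x ≤ W := by
    rw [hW]
    calc x = Real.sqrt (x ^ 2) := (Real.sqrt_sq hx.le).symm
      _ ≤ Real.sqrt (x ^ 2 + 1) := Real.sqrt_le_sqrt (by linarith)
  have hD : x ^ 2 ≤ (B + W) * (A + W) := by nlinarith
  have key : |A - B| / ((B + W) * (A + W)) ≤ P / x ^ 2 :=
    div_le_div₀ (le_trans (abs_nonneg _) hP) hP (by positivity) hD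
  have hpow : x ^ (-(2 * α)) * (P / x ^ 2) = P * x ^ (-(2 * α) - 2) := by
    rw [show (-(2 * α) - 2 : ℝ) = -(2 * α) + (-2) by ring, Real.rpow_add hx,
      show ((-2 : ℝ)) = ((-2 : ℤ) : ℝ) by norm_num, Real.rpow_intCast]
    have : (x : ℝ) ^ (-2 : ℤ) = (x ^ 2)⁻¹ := by
      rw [zpow_neg, zpow_two]; ring_nf
    rw [this]; ring
  calc x ^ (-(2 * α)) * |A - B| / ((B + W) * (A + W))
      = x ^ (-(2 * α)) * (|A - B| / ((B + W) * (A + W))) := by ring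
    _ ≤ x ^ (-(2 * α)) * (P / x ^ 2) :=
        mul_le_mul_of_nonneg_left key (Real.rpow_nonneg hx.le _)
    _ = P * x ^ (-(2 * α) - 2) := hpow

end Helpers

theorem stmt_16
    (d : ℕ) (hd : 1 ≤ d) (μ α : ℝ) (hμ : 0 ≤ μ) (hα : 0 ≤ α)
    (h𝒟0 : 0 < (d : ℝ) - 2 * α - 1) (h𝒟1 : (d : ℝ) - 2 * α - 1 < 1) :
    ∃ C > (0:ℝ), ∀ p : EuclideanSpace ℝ (Fin d),
      (∫⁻ q : EuclideanSpace ℝ (Fin d),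
          ENNReal.ofReal (‖q‖ ^ (-(2 * α)) *
            |Real.sqrt (‖q‖ ^ 2 + μ ^ 2) - Real.sqrt (‖p - q‖ ^ 2 + μ ^ 2)| /
            ((Real.sqrt (‖p - q‖ ^ 2 + μ ^ 2) + Real.sqrt (‖q‖ ^ 2 + 1)) *
              (Real.sqrt (‖q‖ ^ 2 + μ ^ 2) + Real.sqrt (‖q‖ ^ 2 + 1)))))
        ≤ ENNReal.ofReal (C * (‖p‖ ^ ((d : ℝ) - 2 * α - 1) + 1)) := by
  classical
  haveI : Nonempty (Fin d) := ⟨⟨0, hd⟩⟩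
  haveI hNT : Nontrivial (EuclideanSpace ℝ (Fin d)) := inferInstance
  -- α is strictly positive
  have hα' : 0 < α := by
    rcases lt_or_eq_of_le hα with h | h
    · exact h
    · exfalso
      rw [← h] at h𝒟0 h𝒟1
      have h1 : 1 < d := by exact_mod_cast (by linarith : (1:ℝ) < d)
      have h2 : d < 2 := by exact_mod_cast (by linarith : (d:ℝ) < 2)
      omega
  set 𝒟 : ℝ := (d : ℝ) - 2 * α - 1 with h𝒟
  set v : ℝ := (volume (Metric.ball (0 : EuclideanSpace ℝ (Fin d)) 1)).toReal with hv
  have hv0 : 0 < v := by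
    rw [hv]
    exact ENNReal.toReal_pos (Metric.measure_ball_pos volume 0 one_pos).ne'
      measure_ball_lt_top.ne
  have hd0 : (0:ℝ) < d := by exact_mod_cast hd
  have h1𝒟 : (0:ℝ) < 1 - 𝒟 := by linarith
  have hsum : 0 < 2 / 𝒟 + 1 / (1 - 𝒟) := by
    have a1 := div_pos (by norm_num : (0:ℝ) < 2) h𝒟0
    have a2 := div_pos one_pos h1𝒟
    linarith
  set C : ℝ := (d : ℝ) * v * (2 / 𝒟 + 1 / (1 - 𝒟)) with hC
  have hC0 : 0 < C := mul_pos (mul_pos hd0 hv0) hsum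
  refine ⟨C, hC0, fun p => ?_⟩
  by_cases hp : p = 0
  · subst hp
    have hzero : ∀ q : EuclideanSpace ℝ (Fin d),
        ENNReal.ofReal (‖q‖ ^ (-(2 * α)) *
          |Real.sqrt (‖q‖ ^ 2 + μ ^ 2) -
            Real.sqrt (‖(0 : EuclideanSpace ℝ (Fin d)) - q‖ ^ 2 + μ ^ 2)| /
          ((Real.sqrt (‖(0 : EuclideanSpace ℝ (Fin d)) - q‖ ^ 2 + μ ^ 2) +
              Real.sqrt (‖q‖ ^ 2 + 1)) *
            (Real.sqrt (‖q‖ ^ 2 + μ ^ 2) + Real.sqrt (‖q‖ ^ 2 + 1)))) = 0 := by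
      intro q
      simp [zero_sub, norm_neg, sub_self, abs_zero]
    rw [lintegral_congr hzero]
    simp
  -- main case p ≠ 0
  have hR : 0 < ‖p‖ := norm_pos_iff.mpr hp
  set R : ℝ := ‖p‖ with hRdef
  -- the radial majorant
  set G : ℝ → ENNReal := fun y =>
    if y ≤ R then ENNReal.ofReal (2 * y ^ (-(2 * α) - 1))
    else ENNReal.ofReal (R * y ^ (-(2 * α) - 2)) with hG
  have hGmeas : Measurable G := by
    apply Measurable.ite measurableSet_Iic <;> fun_prop
  -- pointwise bound
  have hpt : ∀ q : EuclideanSpace ℝ (Fin d),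
      ENNReal.ofReal (‖q‖ ^ (-(2 * α)) *
        |Real.sqrt (‖q‖ ^ 2 + μ ^ 2) - Real.sqrt (‖p - q‖ ^ 2 + μ ^ 2)| /
        ((Real.sqrt (‖p - q‖ ^ 2 + μ ^ 2) + Real.sqrt (‖q‖ ^ 2 + 1)) *
          (Real.sqrt (‖q‖ ^ 2 + μ ^ 2) + Real.sqrt (‖q‖ ^ 2 + 1)))) ≤ G ‖q‖ := by
    intro q
    by_cases hq : q = 0
    · subst hq
      rw [norm_zero, Real.zero_rpow (by simp; linarith)]
      simp
    · have hx : 0 < ‖q‖ := norm_pos_iff.mpr hq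
      by_cases hle : ‖q‖ ≤ R
      · rw [hG]; simp only [if_pos hle]
        exact ENNReal.ofReal_le_ofReal
          (my_bound1 α hx (norm_nonneg (p - q)) hμ)
      · rw [hG]; simp only [if_neg hle]
        refine ENNReal.ofReal_le_ofReal (my_bound2 α hx (norm_nonneg (p - q)) hμ ?_)
        refine le_trans (my_sqrt_lip (norm_nonneg q) (norm_nonneg (p - q)) (by positivity)) ?_
        rw [abs_sub_le_iff]
        constructor
        · have h := norm_sub_le p (p - q)
          simp only [sub_sub_cancel] at h
          linarith
        · have h := norm_sub_le p q
          linarith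
  have hrank : Module.finrank ℝ (EuclideanSpace ℝ (Fin d)) = d := by
    simp [finrank_euclideanSpace]
  -- integrability and values of the radial pieces
  have hint1 : IntegrableOn (fun y : ℝ => 2 * y ^ (𝒟 - 1)) (Set.Ioc 0 R) := by
    have h := (intervalIntegral.intervalIntegrable_rpow' (a := 0) (b := R)
      (r := 𝒟 - 1) (by linarith)).const_mul 2
    exact (intervalIntegrable_iff_integrableOn_Ioc_of_le hR.le).mp h
  have hval1 : ∫ y in Set.Ioc (0:ℝ) R, 2 * y ^ (𝒟 - 1) = 2 * R ^ 𝒟 / 𝒟 := by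
    rw [← intervalIntegral.integral_of_le hR.le, intervalIntegral.integral_const_mul,
      integral_rpow (Or.inl (by linarith))]
    rw [Real.zero_rpow (by linarith : 𝒟 - 1 + 1 ≠ 0)]
    rw [show 𝒟 - 1 + 1 = 𝒟 by ring]
    ring
  have hint2 : IntegrableOn (fun y : ℝ => R * y ^ (𝒟 - 2)) (Set.Ioi R) :=
    (integrableOn_Ioi_rpow_of_lt (by linarith) hR).const_mul R
  have hval2 : ∫ y in Set.Ioi R, R * y ^ (𝒟 - 2) = R ^ 𝒟 / (1 - 𝒟) := by
    rw [MeasureTheory.integral_const_mul, integral_Ioi_rpow_of_lt (by linarith) hR]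
    rw [show 𝒟 - 2 + 1 = 𝒟 - 1 by ring]
    have e1 : R ^ (𝒟 - 1) * R = R ^ 𝒟 := by
      rw [← Real.rpow_add_one hR.ne']; norm_num
    have e2 : -R ^ (𝒟 - 1) / (𝒟 - 1) = R ^ (𝒟 - 1) / (1 - 𝒟) := by
      rw [div_eq_div_iff (by linarith) (by linarith)]; ring
    rw [e2, ← e1]
    ring
  -- assemble
  calc (∫⁻ q : EuclideanSpace ℝ (Fin d), ENNReal.ofReal (‖q‖ ^ (-(2 * α)) *
          |Real.sqrt (‖q‖ ^ 2 + μ ^ 2) - Real.sqrt (‖p - q‖ ^ 2 + μ ^ 2)| /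
          ((Real.sqrt (‖p - q‖ ^ 2 + μ ^ 2) + Real.sqrt (‖q‖ ^ 2 + 1)) *
            (Real.sqrt (‖q‖ ^ 2 + μ ^ 2) + Real.sqrt (‖q‖ ^ 2 + 1)))))
      ≤ ∫⁻ q : EuclideanSpace ℝ (Fin d), G ‖q‖ := lintegral_mono hpt
    _ = (d : ENNReal) * volume (Metric.ball (0 : EuclideanSpace ℝ (Fin d)) 1) *
          ∫⁻ y in Set.Ioi (0:ℝ), ENNReal.ofReal (y ^ (d - 1)) * G y := by
        rw [my_lintegral_fun_norm_addHaar volume G hGmeas, hrank]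
    _ = (d : ENNReal) * volume (Metric.ball (0 : EuclideanSpace ℝ (Fin d)) 1) *
          (ENNReal.ofReal (2 * R ^ 𝒟 / 𝒟) + ENNReal.ofReal (R ^ 𝒟 / (1 - 𝒟))) := by
        congr 1
        rw [← Set.Ioc_union_Ioi_eq_Ioi hR.le,
          lintegral_union measurableSet_Ioi Set.Ioc_disjoint_Ioi_same]
        congr 1
        · rw [setLIntegral_congr_fun measurableSet_Ioc
            (fun y hy => ?_), ← hval1,
            ofReal_integral_eq_lintegral_ofReal hint1
              ((ae_restrict_mem measurableSet_Ioc).mono (fun y hy =>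
                mul_nonneg (by norm_num) (Real.rpow_nonneg hy.1.le _)))]
          rw [hG]; simp only [if_pos hy.2]
          have hy0 : 0 < y := hy.1
          rw [← ENNReal.ofReal_mul (p := (y:ℝ) ^ (d - 1 : ℕ)) (pow_nonneg hy0.le _)]
          congr 1
          have hcast : (y:ℝ) ^ (d - 1 : ℕ) = y ^ ((d:ℝ) - 1) := by
            rw [← Real.rpow_natCast, Nat.cast_sub hd, Nat.cast_one]
          rw [hcast, mul_comm, mul_assoc, ← Real.rpow_add hy0]
          rw [show (-(2 * α) - 1) + ((d:ℝ) - 1) = 𝒟 - 1 by rw [h𝒟]; ring]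
        · rw [setLIntegral_congr_fun measurableSet_Ioi
            (fun y hy => ?_), ← hval2,
            ofReal_integral_eq_lintegral_ofReal hint2
              ((ae_restrict_mem measurableSet_Ioi).mono (fun y hy =>
                mul_nonneg hR.le (Real.rpow_nonneg (hR.trans hy).le _)))]
          rw [hG]
          have hyR : ¬ y ≤ R := not_le.mpr hy
          simp only [if_neg hyR]
          have hy0 : 0 < y := lt_trans hR hy
          rw [← ENNReal.ofReal_mul (p := (y:ℝ) ^ (d - 1 : ℕ)) (pow_nonneg hy0.le _)]
          congr 1
          have hcast : (y:ℝ) ^ (d - 1 : ℕ) = y ^ ((d:ℝ) - 1) := by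
            rw [← Real.rpow_natCast, Nat.cast_sub hd, Nat.cast_one]
          rw [hcast, mul_comm, mul_assoc, ← Real.rpow_add hy0]
          rw [show (-(2 * α) - 2) + ((d:ℝ) - 1) = 𝒟 - 2 by rw [h𝒟]; ring]
    _ = ENNReal.ofReal (C * R ^ 𝒟) := by
        have hRD : (0:ℝ) ≤ R ^ 𝒟 := Real.rpow_nonneg hR.le _
        have hn1 : (0:ℝ) ≤ 2 * R ^ 𝒟 / 𝒟 := div_nonneg (by linarith) h𝒟0.le
        have hn2 : (0:ℝ) ≤ R ^ 𝒟 / (1 - 𝒟) := div_nonneg hRD h1𝒟.le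
        rw [← ENNReal.ofReal_add hn1 hn2]
        have hball : volume (Metric.ball (0 : EuclideanSpace ℝ (Fin d)) 1)
            = ENNReal.ofReal v := (ENNReal.ofReal_toReal measure_ball_lt_top.ne).symm
        rw [hball, ← ENNReal.ofReal_natCast d,
          ← ENNReal.ofReal_mul (p := (d:ℝ)) (q := v) hd0.le,
          ← ENNReal.ofReal_mul (p := (d:ℝ) * v)
            (q := 2 * R ^ 𝒟 / 𝒟 + R ^ 𝒟 / (1 - 𝒟)) (by positivity)]
        congr 1
        rw [hC]
        have h𝒟ne : 𝒟 ≠ 0 := h𝒟0.ne'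
        have h1𝒟ne : (1 - 𝒟) ≠ 0 := h1𝒟.ne'
        field_simp
    _ ≤ ENNReal.ofReal (C * (R ^ 𝒟 + 1)) := by
        apply ENNReal.ofReal_le_ofReal
        have h0 : (0:ℝ) ≤ R ^ 𝒟 := Real.rpow_nonneg hR.le _
        nlinarith
end
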